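/- arXiv:1902.04460 — 5 statements merged into one kernel-verified Lean document; each statement's English description precedes it below -/
import Mathlib

section
/- Let Γ be a discrete subgroup of E(n), and suppose (G, V) and (G′, V′) are both finite index cocompact translation pairs of Γ. Then there exists a ∈ ℝⁿ with V′ = V + a; in particular V and V′ are parallel affine subspaces of the same dimension. -/
open Metric Filter MeasureTheory Asymptotics

noncomputable section

/-- `ℝⁿ` as a Euclidean space. -/
abbrev En (n : ℕ) := EuclideanSpace ℝ (Fin n)

/-- The Euclidean group `E(n)`, i.e. the isometry group of `ℝⁿ`. -/
abbrev Isom (n : ℕ) := En n ≃ᵢ En n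

/-- The translation part `tran γ = γ 0` of a Euclidean isometry
(for `γ : x ↦ Ax + a` this is `a`). -/
def tran {n : ℕ} (γ : Isom n) : En n := γ 0

/-- The orthogonal part `ort γ` of a Euclidean isometry, as a self-map of `ℝⁿ`
(for `γ : x ↦ Ax + a` this is the map `x ↦ Ax`). -/
def ort {n : ℕ} (γ : Isom n) : En n → En n := fun x => γ x - γ 0

/-- A subgroup `Γ ≤ E(n)` is discrete (in the topology of `O(n) × ℝⁿ`) if and only if the
identity is isolated in `Γ`; the metric `sup_{‖x‖ ≤ 1} ‖γ x - x‖` induces that topology. -/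
def IsDiscreteSubgroup {n : ℕ} (Γ : Subgroup (Isom n)) : Prop :=
  ∃ ε > 0, ∀ γ ∈ Γ, γ ≠ 1 → ∃ x : En n, ‖x‖ ≤ 1 ∧ ε ≤ dist (γ x) x

/-- The subgroup of all translations of `ℝⁿ` inside the isometry group; the translation
subgroup `Γ_T` of a subgroup `Γ ≤ E(n)` is then `Γ ⊓ Translations n`. -/
def Translations (n : ℕ) : Subgroup (Isom n) where
  carrier := {γ : Isom n | ∀ x : En n, γ x = x + γ 0}
  one_mem' := by intro x; simp
  mul_mem' := by
    intro a b ha hb x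
    show a (b x) = x + a (b 0)
    rw [hb x, ha (x + b 0), hb 0, ha (0 + b 0)]
    abel
  inv_mem' := by
    intro a ha x
    show a.symm x = x + a.symm 0
    apply a.injective
    have h0 : a (a.symm 0) = 0 := a.apply_symm_apply 0
    rw [a.apply_symm_apply, ha (x + a.symm 0)]
    have hsum : a.symm 0 + a 0 = 0 := by
      have := ha (a.symm 0); rw [h0] at this; exact this.symm
    rw [add_assoc, hsum, add_zero]

/-- `(G, V)` is a cocompact translation pair of `Γ`: `G ≤ Γ`, `V` is a (nonempty) affine
subspace of `ℝⁿ` with `GV = V`, every `g ∈ G` restricts to `V` as a translation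
(by the vector `v = tran_V(g)`), and `V/G` is compact. -/
structure IsCocompactTranslationPair {n : ℕ} (Γ G : Subgroup (Isom n))
    (V : AffineSubspace ℝ (En n)) : Prop where
  le : G ≤ Γ
  nonempty : (V : Set (En n)).Nonempty
  invariant : ∀ g ∈ G, ∀ x ∈ (V : Set (En n)), g x ∈ (V : Set (En n))
  translation : ∀ g ∈ G, ∃ v : En n, ∀ x ∈ (V : Set (En n)), g x = x + v
  cocompact : ∃ K : Set (En n), IsCompact K ∧ K ⊆ (V : Set (En n)) ∧
    ∀ x ∈ (V : Set (En n)), ∃ g ∈ G, g x ∈ K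

/-- `N_Γ(r)`: the number of `γ ∈ Γ` with `|tran γ| ≤ r`. -/
def NCount {n : ℕ} (Γ : Subgroup (Isom n)) (r : ℝ) : ℕ :=
  {γ : Isom n | γ ∈ Γ ∧ ‖tran γ‖ ≤ r}.ncard

/-- `N_G^V(r)`: the number of `γ ∈ G` whose translation vector `tran_V γ` on `V`
satisfies `|tran_V γ| ≤ r`. -/
def NVCount {n : ℕ} (G : Subgroup (Isom n)) (V : AffineSubspace ℝ (En n)) (r : ℝ) : ℕ :=
  {γ : Isom n | γ ∈ G ∧ ∃ v : En n,
    (∀ x ∈ (V : Set (En n)), γ x = x + v) ∧ ‖v‖ ≤ r}.ncard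

/-- `Λ_G(r)`: the number of distinct orthogonal parts `ort γ` over `γ ∈ G` with
`|tran γ| ≤ r`. -/
def LamCount {n : ℕ} (G : Subgroup (Isom n)) (r : ℝ) : ℕ :=
  {f : En n → En n | ∃ γ, γ ∈ G ∧ ‖tran γ‖ ≤ r ∧ f = ort γ}.ncard

/-- `Λ_G^V(r)`: the number of distinct orthogonal parts `ort γ` over `γ ∈ G` with
`|tran_V γ| ≤ r`. -/
def LamVCount {n : ℕ} (G : Subgroup (Isom n)) (V : AffineSubspace ℝ (En n)) (r : ℝ) : ℕ :=
  {f : En n → En n | ∃ γ, γ ∈ G ∧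
    (∃ v : En n, (∀ x ∈ (V : Set (En n)), γ x = x + v) ∧ ‖v‖ ≤ r) ∧ f = ort γ}.ncard

lemma aux_cover {n : ℕ} (G H : Subgroup (Isom n)) (hHG : H ≤ G)
    (hind : H.relIndex G ≠ 0) (V : Set (En n)) (K : Set (En n)) (hK : IsCompact K)
    (hcov : ∀ x ∈ V, ∃ g ∈ G, g x ∈ K) :
    ∃ K' : Set (En n), IsCompact K' ∧ ∀ x ∈ V, ∃ h ∈ H, h x ∈ K' := by
  have hfin : Finite (G ⧸ H.subgroupOf G) := Nat.finite_of_card_ne_zero hind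
  refine ⟨⋃ c : G ⧸ H.subgroupOf G, (fun y => ((c.out : G) : Isom n)⁻¹ y) '' K, ?_, ?_⟩
  · exact isCompact_iUnion fun c => hK.image (IsometryEquiv.continuous _)
  · intro x hx
    obtain ⟨g, hg, hgx⟩ := hcov x hx
    set g' : G := ⟨g, hg⟩ with hg'
    set c : G ⧸ H.subgroupOf G := QuotientGroup.mk g' with hc
    have hout : (QuotientGroup.mk c.out : G ⧸ H.subgroupOf G) = QuotientGroup.mk g' :=
      QuotientGroup.out_eq' c
    have hmem : (c.out)⁻¹ * g' ∈ H.subgroupOf G := QuotientGroup.eq.mp hout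
    refine ⟨((c.out : G) : Isom n)⁻¹ * g, ?_, ?_⟩
    · simpa using Subgroup.mem_subgroupOf.mp hmem
    · exact Set.mem_iUnion.mpr ⟨c, ⟨g x, hgx, rfl⟩⟩

lemma dir_le {n : ℕ} (H : Subgroup (Isom n)) (V V' : AffineSubspace ℝ (En n))
    (p q : En n) (hp : p ∈ V) (hq : q ∈ V')
    (htr : ∀ h ∈ H, ∃ v : En n, ∀ x ∈ (V : Set (En n)), h x = x + v)
    (htr' : ∀ h ∈ H, ∃ v : En n, ∀ x ∈ (V' : Set (En n)), h x = x + v)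
    (hinv' : ∀ h ∈ H, ∀ x ∈ (V' : Set (En n)), h x ∈ (V' : Set (En n)))
    (K' : Set (En n)) (hK' : IsCompact K')
    (hcov : ∀ x ∈ (V : Set (En n)), ∃ h ∈ H, h x ∈ K') :
    V.direction ≤ V'.direction := by
  intro u hu
  set D' := V'.direction with hD'
  set w : En n := u - (D'.orthogonalProjectionOnto u : En n) with hwdef
  have hw : w ∈ D'ᗮ := by
    have := D'.sub_starProjection_mem_orthogonal u
    rwa [← Submodule.coe_orthogonalProjectionOnto_apply] at this
  have key : ∀ h ∈ H, ∀ v : En n, (∀ x ∈ (V : Set (En n)), h x = x + v) →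
      |(inner ℝ v w : ℝ)| ≤ 2 * ‖p - q‖ * ‖w‖ := by
    intro h hh v hv
    obtain ⟨v', hv'⟩ := htr' h hh
    have hqV' : h q ∈ (V' : Set (En n)) := hinv' h hh q hq
    have h2 : h q = q + v' := hv' q hq
    have hv'mem : v' ∈ D' := by
      have h1 : h q -ᵥ q ∈ V'.direction := AffineSubspace.vsub_mem_direction hqV' hq
      simpa [h2, vsub_eq_sub] using h1
    have hinner0 : (inner ℝ v' w : ℝ) = 0 := (Submodule.mem_orthogonal D' w).mp hw _ hv'mem
    have hnorm : ‖v - v'‖ ≤ 2 * ‖p - q‖ := by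
      have h1 : h p = p + v := hv p hp
      have hd : dist (h p) (h q) = dist p q := h.dist_eq p q
      rw [h1, h2, dist_eq_norm, dist_eq_norm] at hd
      have heq : p + v - (q + v') = (p - q) + (v - v') := by abel
      rw [heq] at hd
      calc ‖v - v'‖ = ‖(p - q) + (v - v') - (p - q)‖ := by congr 1; abel
        _ ≤ ‖(p - q) + (v - v')‖ + ‖p - q‖ := norm_sub_le _ _
        _ = ‖p - q‖ + ‖p - q‖ := by rw [hd]
        _ = 2 * ‖p - q‖ := by ring
    calc |(inner ℝ v w : ℝ)| = |(inner ℝ (v - v') w : ℝ)| := by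
          rw [inner_sub_left, hinner0, sub_zero]
      _ ≤ ‖v - v'‖ * ‖w‖ := abs_real_inner_le_norm _ _
      _ ≤ 2 * ‖p - q‖ * ‖w‖ := mul_le_mul_of_nonneg_right hnorm (norm_nonneg w)
  obtain ⟨R, hR⟩ := hK'.isBounded.subset_closedBall 0
  have hw0 : w = 0 := by
    by_contra hne
    have hwpos : 0 < ‖w‖ := norm_pos_iff.mpr hne
    set B : ℝ := (R + ‖p‖ + 2 * ‖p - q‖) * ‖w‖ with hB
    set t : ℝ := (B + 1) / ‖w‖ ^ 2 with ht
    have hx : p + t • u ∈ (V : Set (En n)) := by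
      have h1 : t • u ∈ V.direction := Submodule.smul_mem _ _ hu
      have h2 := AffineSubspace.vadd_mem_of_mem_direction h1 hp
      simpa [vadd_eq_add, add_comm] using h2
    obtain ⟨h, hh, hk⟩ := hcov _ hx
    obtain ⟨v, hv⟩ := htr h hh
    have hxK : p + t • u + v ∈ K' := by rw [← hv _ hx]; exact hk
    have hnormk : ‖p + t • u + v‖ ≤ R := by
      simpa [Metric.mem_closedBall, dist_zero_right] using hR hxK
    have huw : (inner ℝ u w : ℝ) = ‖w‖ ^ 2 := by
      have hproj : ((D'.orthogonalProjectionOnto u : En n)) ∈ D' := (D'.orthogonalProjectionOnto u).2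
      have h0 : (inner ℝ ((D'.orthogonalProjectionOnto u : En n)) w : ℝ) = 0 :=
        (Submodule.mem_orthogonal D' w).mp hw _ hproj
      have hsplit : (inner ℝ u w : ℝ) =
          inner ℝ w w + inner ℝ ((D'.orthogonalProjectionOnto u : En n)) w := by
        rw [← inner_add_left]
        congr 1
        rw [hwdef]; abel
      rw [hsplit, h0, real_inner_self_eq_norm_sq]; ring
    have hcalc : t * ‖w‖ ^ 2 = (inner ℝ (p + t • u + v - p) w : ℝ) - inner ℝ v w := by
      have heq : p + t • u + v - p = t • u + v := by abel
      rw [heq, inner_add_left, real_inner_smul_left, huw, ht]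
      field_simp
      ring
    have hb1 : |(inner ℝ v w : ℝ)| ≤ 2 * ‖p - q‖ * ‖w‖ := key h hh v hv
    have hb2 : |(inner ℝ (p + t • u + v - p) w : ℝ)| ≤ (R + ‖p‖) * ‖w‖ := by
      calc |(inner ℝ (p + t • u + v - p) w : ℝ)| ≤ ‖p + t • u + v - p‖ * ‖w‖ :=
            abs_real_inner_le_norm _ _
        _ ≤ (R + ‖p‖) * ‖w‖ := by
            have : ‖p + t • u + v - p‖ ≤ ‖p + t • u + v‖ + ‖p‖ := norm_sub_le _ _
            have h3 : ‖p + t • u + v - p‖ ≤ R + ‖p‖ := by linarith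
            exact mul_le_mul_of_nonneg_right h3 (norm_nonneg w)
    have hle : t * ‖w‖ ^ 2 ≤ B := by
      rw [hcalc, hB]
      have := abs_sub_abs_le_abs_sub (inner ℝ (p + t • u + v - p) w : ℝ) (inner ℝ v w : ℝ)
      calc (inner ℝ (p + t • u + v - p) w : ℝ) - inner ℝ v w
          ≤ |(inner ℝ (p + t • u + v - p) w : ℝ)| + |(inner ℝ v w : ℝ)| := by
            have h4 := neg_abs_le (inner ℝ v w : ℝ)
            have h5 := le_abs_self (inner ℝ (p + t • u + v - p) w : ℝ)
            linarith
        _ ≤ (R + ‖p‖) * ‖w‖ + 2 * ‖p - q‖ * ‖w‖ := add_le_add hb2 hb1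
        _ = (R + ‖p‖ + 2 * ‖p - q‖) * ‖w‖ := by ring
    have heq : t * ‖w‖ ^ 2 = B + 1 := by
      rw [ht]; field_simp
    linarith
  have hu' : u = (D'.orthogonalProjectionOnto u : En n) := by
    have := sub_eq_zero.mp hw0
    exact this
  rw [hu']
  exact (D'.orthogonalProjectionOnto u).2

/-- If `(G, V)` and `(G', V')` are both finite index cocompact translation
pairs of a discrete `Γ ≤ E(n)`, then `V' = V + a` for some `a ∈ ℝⁿ`. -/
theorem finite_index_pairs_parallel {n : ℕ} (Γ G G' : Subgroup (Isom n))
    (V V' : AffineSubspace ℝ (En n)) (hΓ : IsDiscreteSubgroup Γ)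
    (hpair : IsCocompactTranslationPair Γ G V) (hfin : G.relIndex Γ ≠ 0)
    (hpair' : IsCocompactTranslationPair Γ G' V') (hfin' : G'.relIndex Γ ≠ 0) :
    ∃ a : En n, (V' : Set (En n)) = (fun x => x + a) '' (V : Set (En n)) := by
  obtain ⟨p, hp⟩ := hpair.nonempty
  obtain ⟨q, hq⟩ := hpair'.nonempty
  set H := G ⊓ G' with hH
  have hrel : H.relIndex Γ ≠ 0 := Subgroup.relIndex_inf_ne_zero hfin hfin'
  have hHG : H.relIndex G ≠ 0 := by
    intro h0
    apply hrel
    rw [← Subgroup.relIndex_mul_relIndex H G Γ inf_le_left hpair.le, h0, zero_mul]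
  have hHG' : H.relIndex G' ≠ 0 := by
    intro h0
    apply hrel
    rw [← Subgroup.relIndex_mul_relIndex H G' Γ inf_le_right hpair'.le, h0, zero_mul]
  obtain ⟨K, hKc, hKV, hKcov⟩ := hpair.cocompact
  obtain ⟨K2, hK2c, hK2V, hK2cov⟩ := hpair'.cocompact
  obtain ⟨K', hK'c, hK'cov⟩ := aux_cover G H inf_le_left hHG (V : Set (En n)) K hKc hKcov
  obtain ⟨K2', hK2'c, hK2'cov⟩ :=
    aux_cover G' H inf_le_right hHG' (V' : Set (En n)) K2 hK2c hK2cov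
  have htrV : ∀ h ∈ H, ∃ v : En n, ∀ x ∈ (V : Set (En n)), h x = x + v :=
    fun h hh => hpair.translation h (Subgroup.mem_inf.mp hh).1
  have htrV' : ∀ h ∈ H, ∃ v : En n, ∀ x ∈ (V' : Set (En n)), h x = x + v :=
    fun h hh => hpair'.translation h (Subgroup.mem_inf.mp hh).2
  have hinvV : ∀ h ∈ H, ∀ x ∈ (V : Set (En n)), h x ∈ (V : Set (En n)) :=
    fun h hh => hpair.invariant h (Subgroup.mem_inf.mp hh).1
  have hinvV' : ∀ h ∈ H, ∀ x ∈ (V' : Set (En n)), h x ∈ (V' : Set (En n)) :=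
    fun h hh => hpair'.invariant h (Subgroup.mem_inf.mp hh).2
  have d1 : V.direction ≤ V'.direction :=
    dir_le H V V' p q hp hq htrV htrV' hinvV' K' hK'c hK'cov
  have d2 : V'.direction ≤ V.direction :=
    dir_le H V' V q p hq hp htrV' htrV hinvV K2' hK2'c hK2'cov
  have hdir : V.direction = V'.direction := le_antisymm d1 d2
  refine ⟨q - p, ?_⟩
  ext y
  simp only [Set.mem_image, SetLike.mem_coe]
  constructor
  · intro hy
    refine ⟨y - (q - p), ?_, by abel⟩
    have h1 : y -ᵥ q ∈ V'.direction := AffineSubspace.vsub_mem_direction hy hq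
    rw [← hdir] at h1
    have h2 := AffineSubspace.vadd_mem_of_mem_direction h1 hp
    have heq : y - (q - p) = (y -ᵥ q) +ᵥ p := by
      simp only [vsub_eq_sub, vadd_eq_add]; abel
    rw [heq]
    exact h2
  · rintro ⟨x, hx, rfl⟩
    have h1 : x -ᵥ p ∈ V.direction := AffineSubspace.vsub_mem_direction hx hp
    rw [hdir] at h1
    have h2 := AffineSubspace.vadd_mem_of_mem_direction h1 hq
    have heq : x + (q - p) = (x -ᵥ p) +ᵥ q := by
      simp only [vsub_eq_sub, vadd_eq_add]; abel
    rw [heq]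
    exact h2
end
end

section
/- Let Γ be a discrete subgroup of E(n) and let G be a subgroup of Γ of finite index m. Then there exists a constant C ≥ 0 such that for all r ≥ 0: N_G(r) ≤ N_Γ(r) ≤ m·N_G(r + C). -/
open Metric Filter MeasureTheory Asymptotics

noncomputable section

section AuxCounting

/-- A totally bounded δ-separated set is finite. -/
lemma finite_of_separated' {α : Type*} [MetricSpace α] {s : Set α}
    (hs : TotallyBounded s) {δ : ℝ} (hδ : 0 < δ)
    (h : ∀ x ∈ s, ∀ y ∈ s, x ≠ y → δ ≤ dist x y) : s.Finite := by
  obtain ⟨t, htf, hst⟩ := (totallyBounded_iff.1 hs) (δ/2) (by positivity)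
  have hsub : s ⊆ ⋃ y ∈ t, s ∩ ball y (δ/2) := by
    intro x hx
    obtain ⟨y, hy, hxy⟩ := Set.mem_iUnion₂.1 (hst hx)
    exact Set.mem_iUnion₂.2 ⟨y, hy, hx, hxy⟩
  refine Set.Finite.subset (Set.Finite.biUnion htf fun y _ => ?_) hsub
  apply Set.Subsingleton.finite
  rintro a ⟨ha, ha'⟩ b ⟨hb, hb'⟩
  by_contra hne
  have h1 := h a ha b hb hne
  have h2 : dist a b ≤ dist a y + dist b y := dist_triangle_right a b y
  rw [mem_ball] at ha' hb'
  linarith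

lemma abs_coord_le' {n : ℕ} (x : En n) (i : Fin n) : |x i| ≤ ‖x‖ := by
  have h1 : (inner ℝ (EuclideanSpace.single i (1:ℝ) : En n) x : ℝ) = x i := by
    simp [EuclideanSpace.inner_single_left]
  have h2 := abs_real_inner_le_norm (EuclideanSpace.single i (1:ℝ) : En n) x
  rwa [h1, EuclideanSpace.norm_single, norm_one, one_mul] at h2

lemma sum_single' {n : ℕ} (x : En n) :
    x = ∑ i : Fin n, x i • (EuclideanSpace.single i (1:ℝ) : En n) := by
  have := (EuclideanSpace.basisFun (Fin n) ℝ).sum_repr x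
  simp only [EuclideanSpace.basisFun_repr, EuclideanSpace.basisFun_apply] at this
  exact this.symm

def pts (n : ℕ) : Fin (n+1) → En n := Fin.cons 0 (fun i => EuclideanSpace.single i 1)

def Fmap {n : ℕ} (γ : Isom n) : Fin (n+1) → En n := fun i => γ (pts n i)

lemma key_estimate {n : ℕ} (γ γ' : Isom n) (x : En n) (hx : ‖x‖ ≤ 1) :
    dist (γ x) (γ' x) ≤ (2*n+1) * dist (Fmap γ) (Fmap γ') := by
  set L := γ.toRealLinearIsometryEquiv with hL
  set L' := γ'.toRealLinearIsometryEquiv with hL'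
  set d := dist (Fmap γ) (Fmap γ') with hd
  have hd0 : (0:ℝ) ≤ d := dist_nonneg
  have htr : ‖γ 0 - γ' 0‖ ≤ d := by
    have := dist_le_pi_dist (Fmap γ) (Fmap γ') 0
    simpa [Fmap, pts, dist_eq_norm, hd] using this
  have hdi : ∀ i : Fin n, ‖L (EuclideanSpace.single i 1) - L' (EuclideanSpace.single i 1)‖ ≤ 2 * d := by
    intro i
    have h1 : ‖γ (EuclideanSpace.single i 1) - γ' (EuclideanSpace.single i 1)‖ ≤ d := by
      have := dist_le_pi_dist (Fmap γ) (Fmap γ') i.succ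
      simpa [Fmap, pts, dist_eq_norm, hd] using this
    have e1 : L (EuclideanSpace.single i 1) = γ (EuclideanSpace.single i 1) - γ 0 := by
      simp [hL]
    have e1' : L' (EuclideanSpace.single i 1) = γ' (EuclideanSpace.single i 1) - γ' 0 := by
      simp [hL']
    rw [e1, e1']
    have : (γ (EuclideanSpace.single i 1) - γ 0) - (γ' (EuclideanSpace.single i 1) - γ' 0)
        = (γ (EuclideanSpace.single i 1) - γ' (EuclideanSpace.single i 1)) - (γ 0 - γ' 0) := by
      abel
    rw [this]
    calc ‖_ - _‖ ≤ ‖γ (EuclideanSpace.single i 1) - γ' (EuclideanSpace.single i 1)‖ + ‖γ 0 - γ' 0‖ :=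
          norm_sub_le _ _
      _ ≤ d + d := add_le_add h1 htr
      _ = 2 * d := by ring
  have hLx : ‖L x - L' x‖ ≤ 2 * n * d := by
    have hx' : (L x - L' x : En n)
        = ∑ i : Fin n, x i • (L (EuclideanSpace.single i 1) - L' (EuclideanSpace.single i 1)) := by
      conv_lhs => rw [show (x : En n) = ∑ i : Fin n, x i • (EuclideanSpace.single i (1:ℝ) : En n)
        from sum_single' x]
      simp only [map_sum, _root_.map_smul, smul_sub, Finset.sum_sub_distrib]
    rw [hx']
    calc ‖_‖ ≤ ∑ i : Fin n, ‖x i • (L (EuclideanSpace.single i 1) - L' (EuclideanSpace.single i 1))‖ :=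
          norm_sum_le _ _
      _ ≤ ∑ _i : Fin n, 2 * d := by
          apply Finset.sum_le_sum
          intro i _
          rw [norm_smul, Real.norm_eq_abs]
          have h3 : |x i| ≤ 1 := le_trans (abs_coord_le' x i) hx
          calc |x i| * ‖_‖ ≤ 1 * (2 * d) :=
                mul_le_mul h3 (hdi i) (norm_nonneg _) zero_le_one
            _ = 2 * d := one_mul _
      _ = n * (2 * d) := by simp [Finset.sum_const, Finset.card_univ]
      _ = 2 * n * d := by ring
  have hgx : γ x = L x + γ 0 := by simp [hL]
  have hgx' : γ' x = L' x + γ' 0 := by simp [hL']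
  rw [dist_eq_norm, hgx, hgx']
  have : (L x + γ 0) - (L' x + γ' 0) = (L x - L' x) + (γ 0 - γ' 0) := by abel
  rw [this]
  calc ‖_ + _‖ ≤ ‖L x - L' x‖ + ‖γ 0 - γ' 0‖ := norm_add_le _ _
    _ ≤ 2 * n * d + d := add_le_add hLx htr
    _ = (2*n+1) * d := by ring

lemma pts_norm_le {n : ℕ} (i : Fin (n+1)) : ‖pts n i‖ ≤ 1 := by
  induction i using Fin.cases with
  | zero => simp [pts]
  | succ j => simp [pts, EuclideanSpace.norm_single]

lemma finite_tran_le {n : ℕ} {Γ : Subgroup (Isom n)} (hΓ : IsDiscreteSubgroup Γ) (r : ℝ) :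
    {γ : Isom n | γ ∈ Γ ∧ ‖tran γ‖ ≤ r}.Finite := by
  obtain ⟨ε, hε, hsep⟩ := hΓ
  set S := {γ : Isom n | γ ∈ Γ ∧ ‖tran γ‖ ≤ r} with hS
  set δ : ℝ := ε / (2*n+1) with hδdef
  have hK : (0:ℝ) < 2*n+1 := by positivity
  have hδ : 0 < δ := div_pos hε hK
  have hsepF : ∀ γ ∈ Γ, ∀ γ' ∈ Γ, γ ≠ γ' → δ ≤ dist (Fmap γ) (Fmap γ') := by
    intro γ hγ γ' hγ' hne
    have hη : γ'⁻¹ * γ ∈ Γ := mul_mem (inv_mem hγ') hγ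
    have hη1 : γ'⁻¹ * γ ≠ 1 := fun h => hne (inv_mul_eq_one.mp h).symm
    obtain ⟨x, hx1, hx2⟩ := hsep _ hη hη1
    have e1 : γ' ((γ'⁻¹ * γ) x) = γ x := by
      rw [IsometryEquiv.mul_apply, IsometryEquiv.apply_inv_self]
    have hεle : ε ≤ dist (γ x) (γ' x) :=
      calc ε ≤ dist ((γ'⁻¹ * γ) x) x := hx2
        _ = dist (γ' ((γ'⁻¹ * γ) x)) (γ' x) := (γ'.dist_eq _ _).symm
        _ = dist (γ x) (γ' x) := by rw [e1]
    have hle := key_estimate γ γ' x hx1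
    rw [hδdef, div_le_iff₀ hK]
    calc ε ≤ dist (γ x) (γ' x) := hεle
      _ ≤ (2*n+1) * dist (Fmap γ) (Fmap γ') := hle
      _ = dist (Fmap γ) (Fmap γ') * (2*n+1) := by ring
  have himb : Fmap '' S ⊆ closedBall (0 : Fin (n+1) → En n) (r + 1) := by
    rintro _ ⟨γ, ⟨hγΓ, hγr⟩, rfl⟩
    rw [mem_closedBall, dist_zero_right]
    have hr1 : (0:ℝ) ≤ r + 1 := by
      have := (norm_nonneg (tran γ)).trans hγr; linarith
    rw [pi_norm_le_iff_of_nonneg hr1]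
    intro i
    have h1 : dist (γ (pts n i)) (γ 0) = dist (pts n i) 0 := γ.dist_eq _ _
    calc ‖Fmap γ i‖ = ‖(γ (pts n i) - γ 0) + γ 0‖ := by rw [sub_add_cancel]; rfl
      _ ≤ ‖γ (pts n i) - γ 0‖ + ‖γ 0‖ := norm_add_le _ _
      _ = ‖pts n i‖ + ‖tran γ‖ := by
          rw [← dist_eq_norm, h1, dist_zero_right]; rfl
      _ ≤ 1 + r := add_le_add (pts_norm_le i) hγr
      _ = r + 1 := by ring
  have htb : TotallyBounded (Fmap '' S) :=
    (isCompact_closedBall _ _).totallyBounded.subset himb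
  have hinj : Set.InjOn Fmap S := by
    intro γ hγ γ' hγ' hEq
    by_contra hne
    have := hsepF γ hγ.1 γ' hγ'.1 hne
    rw [hEq, dist_self] at this
    linarith
  have hfin : (Fmap '' S).Finite := by
    apply finite_of_separated' htb hδ
    rintro _ ⟨γ, hγ, rfl⟩ _ ⟨γ', hγ', rfl⟩ hne
    have hne' : γ ≠ γ' := fun h => hne (by rw [h])
    exact hsepF γ hγ.1 γ' hγ'.1 hne'
  exact Set.Finite.of_finite_image hfin hinj

end AuxCounting

/-- If `G ≤ Γ` is of finite index `m` in a discrete `Γ ≤ E(n)`, then there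
is `C ≥ 0` with `N_G(r) ≤ N_Γ(r) ≤ m · N_G(r + C)` for all `r ≥ 0`. -/
theorem counting_comparison_finite_index {n : ℕ} (Γ G : Subgroup (Isom n)) (m : ℕ)
    (hΓ : IsDiscreteSubgroup Γ) (hle : G ≤ Γ)
    (hm : G.relIndex Γ = m) (hm0 : m ≠ 0) :
    ∃ C : ℝ, 0 ≤ C ∧ ∀ r : ℝ, 0 ≤ r →
      NCount G r ≤ NCount Γ r ∧ NCount Γ r ≤ m * NCount G (r + C) := by
  classical
  have hQcard : Nat.card (Γ ⧸ G.subgroupOf Γ) = m := by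
    rw [← Subgroup.index_eq_card]; exact hm
  haveI : Finite (Γ ⧸ G.subgroupOf Γ) :=
    Nat.finite_of_card_ne_zero (by rw [hQcard]; exact hm0)
  set Q := Γ ⧸ G.subgroupOf Γ with hQ
  obtain ⟨C₀, hC₀⟩ : ∃ C₀ : ℝ, ∀ q : Q, ‖tran ((q.out : Γ) : Isom n)‖ ≤ C₀ :=
    Finite.exists_le _
  refine ⟨max C₀ 0, le_max_right _ _, fun r hr => ?_⟩
  set C := max C₀ 0 with hC
  have hfinΓ := finite_tran_le hΓ r
  have hTfin : {γ : Isom n | γ ∈ G ∧ ‖tran γ‖ ≤ r + C}.Finite :=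
    (finite_tran_le hΓ (r + C)).subset (fun γ hγ => ⟨hle hγ.1, hγ.2⟩)
  constructor
  · exact Set.ncard_le_ncard (fun γ hγ => ⟨hle hγ.1, hγ.2⟩) hfinΓ
  · set S := {γ : Isom n | γ ∈ Γ ∧ ‖tran γ‖ ≤ r} with hSdef
    set T := {γ : Isom n | γ ∈ G ∧ ‖tran γ‖ ≤ r + C} with hTdef
    haveI : Finite ↥T := hTfin.to_subtype
    have hmem : ∀ s : ↥S, ((((QuotientGroup.mk (⟨s.1, s.2.1⟩ : Γ) : Q).out : Γ) : Isom n)⁻¹ * s.1) ∈ T := by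
      rintro ⟨γ, hγΓ, hγr⟩
      set q : Q := QuotientGroup.mk (⟨γ, hγΓ⟩ : Γ) with hq
      set ρ : Γ := q.out with hρ
      have hcoset : ρ⁻¹ * (⟨γ, hγΓ⟩ : Γ) ∈ G.subgroupOf Γ := by
        rw [← QuotientGroup.eq]
        rw [hρ]
        exact q.out_eq
      have hGmem : ((ρ : Isom n)⁻¹ * γ) ∈ G := by
        have := Subgroup.mem_subgroupOf.mp hcoset
        simpa using this
      refine ⟨hGmem, ?_⟩
      set g : Isom n := (ρ : Isom n)⁻¹ * γ with hg
      have hcomp : (ρ : Isom n) (g 0) = γ 0 := by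
        rw [hg, ← IsometryEquiv.mul_apply, mul_inv_cancel_left]
      have h1 : ‖tran g‖ = dist ((ρ : Isom n) (g 0)) ((ρ : Isom n) 0) := by
        rw [(ρ : Isom n).dist_eq, dist_zero_right]; rfl
      rw [h1, hcomp, dist_eq_norm]
      calc ‖γ 0 - (ρ : Isom n) 0‖ ≤ ‖γ 0‖ + ‖(ρ : Isom n) 0‖ := norm_sub_le _ _
        _ ≤ r + C := by
            refine add_le_add hγr ?_
            exact le_trans (hC₀ q) (le_max_left _ _)
    set f : ↥S → Q × ↥T := fun s =>
      ⟨QuotientGroup.mk (⟨s.1, s.2.1⟩ : Γ),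
       ⟨_, hmem s⟩⟩ with hf
    have hfinj : Function.Injective f := by
      rintro ⟨γ, hγ⟩ ⟨γ', hγ'⟩ hEq
      have h1 : (QuotientGroup.mk (⟨γ, hγ.1⟩ : Γ) : Q) = QuotientGroup.mk (⟨γ', hγ'.1⟩ : Γ) :=
        congrArg Prod.fst hEq
      have h2 : ((((QuotientGroup.mk (⟨γ, hγ.1⟩ : Γ) : Q).out : Γ) : Isom n)⁻¹ * γ)
          = ((((QuotientGroup.mk (⟨γ', hγ'.1⟩ : Γ) : Q).out : Γ) : Isom n)⁻¹ * γ') := by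
        have := congrArg Prod.snd hEq
        exact congrArg Subtype.val this
      rw [h1] at h2
      have : γ = γ' := by
        have := congrArg (fun z => (((QuotientGroup.mk (⟨γ', hγ'.1⟩ : Γ) : Q).out : Γ) : Isom n) * z) h2
        simpa [mul_inv_cancel_left] using this
      exact Subtype.ext this
    have hcard1 : NCount Γ r = Nat.card ↥S := (Nat.card_coe_set_eq _).symm
    have hcard2 : NCount G (r + C) = Nat.card ↥T := (Nat.card_coe_set_eq _).symm
    rw [hcard1, hcard2]
    calc Nat.card ↥S ≤ Nat.card (Q × ↥T) := Nat.card_le_card_of_injective f hfinj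
      _ = Nat.card Q * Nat.card ↥T := Nat.card_prod _ _
      _ = m * Nat.card ↥T := by rw [hQcard]
end
end

section
/- Let Γ be a discrete subgroup of E(n) and let G be a subgroup of Γ. Then G has finite index in Γ if and only if N_G(r) = Θ(N_Γ(r)); equivalently, if and only if Γ and G have the same dimension, where the dimension of a discrete subgroup H ≤ E(n) is the unique k ∈ ℕ with N_H(r) = Θ(r^k). -/
open Metric Filter MeasureTheory Asymptotics

noncomputable section

section SGAuxSection

variable {n : ℕ}

namespace SGAux

variable {n : ℕ}

/-- the ball set in a subgroup -/
def SB (H : Subgroup (Isom n)) (r : ℝ) : Set (Isom n) := {γ | γ ∈ H ∧ ‖tran γ‖ ≤ r}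

lemma tran_inv_mul (γ δ : Isom n) : ‖tran (γ⁻¹ * δ)‖ = dist (γ 0) (δ 0) := by
  have h1 : tran (γ⁻¹ * δ) = γ.symm (δ 0) := rfl
  have h3 := γ.symm.dist_eq (δ 0) (γ 0)
  rw [γ.symm_apply_apply] at h3
  rw [h1, ← dist_zero_right, h3, dist_comm]

lemma SB_mono (H : Subgroup (Isom n)) {r r' : ℝ} (h : r ≤ r') : SB H r ⊆ SB H r' :=
  fun γ hγ => ⟨hγ.1, hγ.2.trans h⟩

lemma SB_mono_group {H K : Subgroup (Isom n)} (h : H ≤ K) (r : ℝ) : SB H r ⊆ SB K r :=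
  fun γ hγ => ⟨h hγ.1, hγ.2⟩

lemma one_mem_SB (H : Subgroup (Isom n)) {r : ℝ} (hr : 0 ≤ r) : (1 : Isom n) ∈ SB H r := by
  refine ⟨one_mem H, ?_⟩
  have : tran (1 : Isom n) = 0 := rfl
  rw [this, norm_zero]; exact hr

/-- evaluation points: 0 and the standard basis vectors -/
def pts (n : ℕ) : Fin (n + 1) → En n := Fin.cons 0 (fun i => EuclideanSpace.single i 1)

lemma norm_pts_le (i : Fin (n + 1)) : ‖pts n i‖ ≤ 1 := by
  induction i using Fin.cases with
  | zero => simp [pts]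
  | succ i => simp [pts]

lemma coord_abs_le_norm (x : En n) (i : Fin n) : |x i| ≤ ‖x‖ := by
  rw [EuclideanSpace.norm_eq]
  calc |x i| = Real.sqrt (‖x i‖ ^ 2) := by
        rw [Real.sqrt_sq_eq_abs, Real.norm_eq_abs, abs_abs]
  _ ≤ _ := Real.sqrt_le_sqrt <|
      Finset.single_le_sum (f := fun j => ‖x j‖ ^ 2) (fun j _ => sq_nonneg _) (Finset.mem_univ i)

lemma basis_decomp (x : En n) : x = ∑ i, x i • EuclideanSpace.single i (1 : ℝ) := by
  conv_lhs => rw [← (EuclideanSpace.basisFun (Fin n) ℝ).sum_repr x]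
  simp [EuclideanSpace.basisFun_repr, EuclideanSpace.basisFun_apply]


lemma exists_sep {Γ : Subgroup (Isom n)} (hΓ : IsDiscreteSubgroup Γ) :
    ∃ ε > 0, ∀ γ ∈ Γ, ∀ δ ∈ Γ, γ ≠ δ →
      ∃ i : Fin (n + 1), ε ≤ dist (γ (pts n i)) (δ (pts n i)) := by
  obtain ⟨ε, hε, hsep⟩ := hΓ
  have hden : (0:ℝ) < 1 + 2 * n := by positivity
  refine ⟨ε / (1 + 2 * n), by positivity, ?_⟩
  intro γ hγ δ hδ hne
  by_contra hcon
  push_neg at hcon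
  set ε' : ℝ := ε / (1 + 2 * n) with hε'
  have hε'pos : 0 < ε' := by positivity
  -- discreteness applied to δ⁻¹ * γ
  obtain ⟨x, hx1, hx2⟩ := hsep (δ⁻¹ * γ) (mul_mem (inv_mem hδ) hγ) (by
    intro h
    exact hne (by
      have := congrArg (fun η => δ * η) h
      simpa [mul_assoc] using this))
  have hd : dist ((δ⁻¹ * γ) x) x = dist (γ x) (δ x) := by
    have h1 : (δ⁻¹ * γ) x = δ.symm (γ x) := rfl
    have h2 := δ.symm.dist_eq (γ x) (δ x)
    rw [δ.symm_apply_apply] at h2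
    rw [h1, h2]
  rw [hd] at hx2
  -- Mazur-Ulam decompositions
  set L := γ.toRealLinearIsometryEquiv with hL
  set M := δ.toRealLinearIsometryEquiv with hM
  have hLa : ∀ y : En n, L y = γ y - γ 0 := fun y => γ.toRealLinearIsometryEquiv_apply y
  have hMa : ∀ y : En n, M y = δ y - δ 0 := fun y => δ.toRealLinearIsometryEquiv_apply y
  -- basis estimates
  have hbasis : ∀ i : Fin n, ‖L (EuclideanSpace.single i 1) - M (EuclideanSpace.single i 1)‖
      < 2 * ε' := by
    intro i
    have h0 : dist (γ (pts n 0)) (δ (pts n 0)) < ε' := hcon 0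
    have hi : dist (γ (pts n i.succ)) (δ (pts n i.succ)) < ε' := hcon i.succ
    rw [show pts n 0 = 0 from Fin.cons_zero _ _] at h0
    rw [show pts n i.succ = EuclideanSpace.single i 1 from Fin.cons_succ _ _ i] at hi
    have : L (EuclideanSpace.single i 1) - M (EuclideanSpace.single i 1)
        = (γ (EuclideanSpace.single i 1) - δ (EuclideanSpace.single i 1)) - (γ 0 - δ 0) := by
      rw [hLa, hMa]; abel
    rw [this]
    calc ‖_ - _‖ ≤ ‖γ (EuclideanSpace.single i 1) - δ (EuclideanSpace.single i 1)‖
          + ‖γ 0 - δ 0‖ := norm_sub_le _ _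
    _ < ε' + ε' := by
        rw [dist_eq_norm] at hi h0
        exact add_lt_add hi h0
    _ = 2 * ε' := by ring
  -- the contradiction: bound dist (γ x) (δ x)
  have hLM : ∀ y : En n, ‖y‖ ≤ 1 → ‖L y - M y‖ ≤ n * (2 * ε') := by
    intro y hy
    have hdec : L y - M y = ∑ i, y i • (L (EuclideanSpace.single i 1)
        - M (EuclideanSpace.single i 1)) := by
      conv_lhs => rw [basis_decomp y]
      rw [map_sum, map_sum, ← Finset.sum_sub_distrib]
      congr 1
      ext i
      rw [L.map_smul, M.map_smul, smul_sub]
    rw [hdec]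
    calc ‖∑ i, y i • (L (EuclideanSpace.single i 1) - M (EuclideanSpace.single i 1))‖
        ≤ ∑ i, ‖y i • (L (EuclideanSpace.single i 1) - M (EuclideanSpace.single i 1))‖ :=
          norm_sum_le _ _
    _ ≤ ∑ _i : Fin n, 2 * ε' := by
        apply Finset.sum_le_sum
        intro i _
        rw [norm_smul, Real.norm_eq_abs]
        have h1 : |y i| ≤ 1 := (coord_abs_le_norm y i).trans hy
        have h2 := (hbasis i).le
        calc |y i| * ‖_‖ ≤ 1 * (2 * ε') := by
              apply mul_le_mul h1 h2 (norm_nonneg _) zero_le_one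
        _ = 2 * ε' := one_mul _
    _ = n * (2 * ε') := by simp [Finset.sum_const, mul_comm]
  have hfin : dist (γ x) (δ x) < ε := by
    have : γ x - δ x = (L x - M x) + (γ 0 - δ 0) := by rw [hLa, hMa]; abel
    rw [dist_eq_norm, this]
    have h0 : ‖γ 0 - δ 0‖ < ε' := by
      have := hcon 0
      rw [show pts n 0 = 0 from Fin.cons_zero _ _, dist_eq_norm] at this
      exact this
    calc ‖(L x - M x) + (γ 0 - δ 0)‖ ≤ ‖L x - M x‖ + ‖γ 0 - δ 0‖ := norm_add_le _ _
    _ < n * (2 * ε') + ε' := by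
        exact add_lt_add_of_le_of_lt (hLM x hx1) h0
    _ = (1 + 2 * n) * ε' := by ring
    _ = ε := by rw [hε']; field_simp
  linarith


lemma SB_finite {Γ : Subgroup (Isom n)} (hΓ : IsDiscreteSubgroup Γ) (r : ℝ) :
    (SB Γ r).Finite := by
  obtain ⟨ε, hε, hsep⟩ := exists_sep hΓ
  by_contra hinf0
  have hinf : (SB Γ r).Infinite := hinf0
  have hr : 0 ≤ r := by
    obtain ⟨γ, hγ⟩ := hinf.nonempty
    exact le_trans (norm_nonneg _) hγ.2
  set Φ : Isom n → (Fin (n + 1) → En n) := fun γ i => γ (pts n i) with hΦ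
  have hΦmem : ∀ γ ∈ SB Γ r, Φ γ ∈ closedBall (0 : Fin (n + 1) → En n) (r + 1) := by
    intro γ hγ
    rw [mem_closedBall, dist_zero_right]
    rw [pi_norm_le_iff_of_nonneg (by linarith)]
    intro i
    have h1 : ‖γ (pts n i)‖ ≤ dist (γ (pts n i)) (γ 0) + ‖γ 0‖ := by
      rw [dist_eq_norm]
      have := norm_add_le (γ (pts n i) - γ 0) (γ 0)
      rwa [sub_add_cancel] at this
    have h2 : dist (γ (pts n i)) (γ 0) = dist (pts n i) 0 := γ.dist_eq _ _
    have h3 : dist (pts n i) 0 ≤ 1 := by rw [dist_zero_right]; exact norm_pts_le i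
    have h4 : ‖γ 0‖ ≤ r := hγ.2
    calc ‖Φ γ i‖ = ‖γ (pts n i)‖ := rfl
    _ ≤ dist (γ (pts n i)) (γ 0) + ‖γ 0‖ := h1
    _ ≤ 1 + r := by rw [h2]; exact add_le_add h3 h4
    _ = r + 1 := by ring
  obtain ⟨t, _tsub, htfin, hcover⟩ :=
    (isCompact_closedBall (0 : Fin (n + 1) → En n) (r + 1)).finite_cover_balls
      (show (0:ℝ) < ε / 3 by positivity)
  have hch : ∀ γ ∈ SB Γ r, ∃ c ∈ t, Φ γ ∈ ball c (ε / 3) := by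
    intro γ hγ
    have := hcover (hΦmem γ hγ)
    simpa using this
  choose! f hf1 hf2 using hch
  obtain ⟨γ, hγ, δ, hδ, hne, heq⟩ := hinf.exists_ne_map_eq_of_mapsTo hf1 htfin
  obtain ⟨i, hi⟩ := hsep γ hγ.1 δ hδ.1 hne
  have h1 : dist (Φ γ) (Φ δ) < 2 * (ε / 3) := by
    have a1 : dist (Φ γ) (f γ) < ε / 3 := mem_ball.mp (hf2 γ hγ)
    have a2 : dist (Φ δ) (f δ) < ε / 3 := mem_ball.mp (hf2 δ hδ)
    rw [← heq] at a2
    calc dist (Φ γ) (Φ δ) ≤ dist (Φ γ) (f γ) + dist (Φ δ) (f γ) := dist_triangle_right _ _ _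
    _ < ε / 3 + ε / 3 := add_lt_add a1 a2
    _ = 2 * (ε / 3) := by ring
  have h2 : dist (γ (pts n i)) (δ (pts n i)) ≤ dist (Φ γ) (Φ δ) := dist_le_pi_dist (Φ γ) (Φ δ) i
  linarith

lemma ncard_biUnion_le {α ι : Type*} (t : Finset ι) (f : ι → Set α) :
    (⋃ i ∈ t, f i).ncard ≤ ∑ i ∈ t, (f i).ncard := by
  classical
  induction t using Finset.induction_on with
  | empty => simp
  | insert _ _ ha ih =>
    rename_i a s
    rw [Finset.sum_insert ha, Finset.set_biUnion_insert]
    exact le_trans (Set.ncard_union_le _ _) (add_le_add_right ih _)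

lemma sum_ncard_le {α ι : Type*} (t : Finset ι) (f : ι → Set α) (S : Set α) (hS : S.Finite)
    (hsub : ∀ i ∈ t, f i ⊆ S)
    (hdisj : ∀ i ∈ t, ∀ j ∈ t, i ≠ j → Disjoint (f i) (f j)) :
    ∑ i ∈ t, (f i).ncard ≤ S.ncard := by
  classical
  induction t using Finset.induction_on generalizing S with
  | empty => simp
  | insert _ _ ha ih =>
    rename_i a s
    rw [Finset.sum_insert ha]
    have h1 : f a ⊆ S := hsub a (Finset.mem_insert_self _ _)
    have h2 : ∀ i ∈ s, f i ⊆ S \ f a := by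
      intro i hi x hx
      refine ⟨hsub i (Finset.mem_insert_of_mem hi) hx, ?_⟩
      intro hxa
      have hne : a ≠ i := by rintro rfl; exact ha hi
      exact Set.disjoint_left.mp
        (hdisj a (Finset.mem_insert_self _ _) i (Finset.mem_insert_of_mem hi) hne) hxa hx
    have h3 := ih (S \ f a) hS.diff h2
      (fun i hi j hj hij => hdisj i (Finset.mem_insert_of_mem hi) j (Finset.mem_insert_of_mem hj) hij)
    calc (f a).ncard + ∑ i ∈ s, (f i).ncard ≤ (f a).ncard + (S \ f a).ncard :=
          add_le_add_right h3 _
    _ = (f a ∪ S \ f a).ncard :=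
          (Set.ncard_union_eq Set.disjoint_sdiff_right (hS.subset h1) hS.diff).symm
    _ = S.ncard := by rw [Set.union_diff_cancel h1]


lemma doubling (H : Subgroup (Isom n)) (hfin : ∀ r, (SB H r).Finite) :
    ∃ N : ℕ, 0 < N ∧ ∀ r > 0, (SB H (2 * r)).ncard ≤ N * (SB H r).ncard := by
  classical
  obtain ⟨t, _tsub, htfin, hcover⟩ :=
    (isCompact_closedBall (0 : En n) 2).finite_cover_balls (show (0:ℝ) < 1/2 by norm_num)
  refine ⟨htfin.toFinset.card + 1, Nat.succ_pos _, ?_⟩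
  intro r hr
  set A : En n → Set (Isom n) :=
    fun c => {γ | γ ∈ SB H (2 * r) ∧ dist (γ 0) (r • c) < r / 2} with hA
  have hsub : SB H (2 * r) ⊆ ⋃ c ∈ htfin.toFinset, A c := by
    intro γ hγ
    have h2 : (r⁻¹ • (γ 0)) ∈ closedBall (0 : En n) 2 := by
      rw [mem_closedBall, dist_zero_right, norm_smul, norm_inv, Real.norm_eq_abs,
        abs_of_pos hr]
      have h3 : ‖γ 0‖ ≤ 2 * r := hγ.2
      rw [inv_mul_le_iff₀ hr]
      linarith
    have := hcover h2
    simp only [Set.mem_iUnion, mem_ball] at this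
    obtain ⟨c, hc, hballc⟩ := this
    refine Set.mem_biUnion (htfin.mem_toFinset.mpr hc) ?_
    refine ⟨hγ, ?_⟩
    have h4 : dist (r • (r⁻¹ • γ 0)) (r • c) = |r| * dist (r⁻¹ • γ 0) c := by
      rw [dist_smul₀, Real.norm_eq_abs]
    rw [smul_inv_smul₀ hr.ne'] at h4
    rw [h4, abs_of_pos hr]
    calc r * dist (r⁻¹ • γ 0) c < r * (1/2) := by
          exact (mul_lt_mul_iff_right₀ hr).mpr hballc
    _ = r / 2 := by ring
  have hcard : ∀ c, (A c).ncard ≤ (SB H r).ncard := by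
    intro c
    rcases (A c).eq_empty_or_nonempty with h | ⟨γc, hγc⟩
    · simp [h]
    · have hinj : Function.Injective (fun g : Isom n => γc⁻¹ * g) := fun a b hab => by
        simpa using mul_left_cancel hab
      have himg : (fun g : Isom n => γc⁻¹ * g) '' A c ⊆ SB H r := by
        rintro _ ⟨g, hg, rfl⟩
        refine ⟨mul_mem (inv_mem hγc.1.1) hg.1.1, ?_⟩
        rw [show tran (γc⁻¹ * g) = tran (γc⁻¹ * g) from rfl, tran_inv_mul]
        have := dist_triangle (γc 0) (r • c) (g 0)
        have h5 : dist (r • c) (g 0) = dist (g 0) (r • c) := dist_comm _ _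
        have h6 : dist (γc 0) (r • c) < r / 2 := hγc.2
        have h7 : dist (g 0) (r • c) < r / 2 := hg.2
        linarith [dist_triangle (γc 0) (r • c) (g 0)]
      calc (A c).ncard = ((fun g : Isom n => γc⁻¹ * g) '' A c).ncard :=
            (Set.ncard_image_of_injective _ hinj).symm
      _ ≤ (SB H r).ncard := Set.ncard_le_ncard himg (hfin r)
  calc (SB H (2 * r)).ncard ≤ (⋃ c ∈ htfin.toFinset, A c).ncard := by
        have hUfin : (⋃ c ∈ htfin.toFinset, A c).Finite :=
          Set.Finite.biUnion (htfin.toFinset.finite_toSet)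
            (fun c _ => (hfin (2 * r)).subset (fun x hx => hx.1))
        exact Set.ncard_le_ncard hsub hUfin
  _ ≤ ∑ c ∈ htfin.toFinset, (A c).ncard := ncard_biUnion_le _ _
  _ ≤ ∑ _c ∈ htfin.toFinset, (SB H r).ncard := Finset.sum_le_sum (fun c _ => hcard c)
  _ = htfin.toFinset.card * (SB H r).ncard := by rw [Finset.sum_const, smul_eq_mul]
  _ ≤ (htfin.toFinset.card + 1) * (SB H r).ncard :=
        Nat.mul_le_mul_right _ (Nat.le_succ _)


end SGAux

end SGAuxSection

open SGAux

/-- A subgroup `G` of a discrete `Γ ≤ E(n)` has finite index in `Γ`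
if and only if `N_G(r) = Θ(N_Γ(r))` (equivalently, iff `G` and `Γ` have the same dimension). -/
theorem finite_index_iff_same_growth {n : ℕ} (Γ G : Subgroup (Isom n))
    (hΓ : IsDiscreteSubgroup Γ) (hle : G ≤ Γ) :
    G.relIndex Γ ≠ 0 ↔
      (fun r : ℝ => (NCount G r : ℝ)) =Θ[atTop] (fun r : ℝ => (NCount Γ r : ℝ)) := by
  classical
  have hNC : ∀ (H : Subgroup (Isom n)) (r : ℝ), NCount H r = (SB H r).ncard := fun _ _ => rfl
  have hfinΓ : ∀ r, (SB Γ r).Finite := SB_finite hΓ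
  have hfinG : ∀ r, (SB G r).Finite := fun r => (hfinΓ r).subset (SB_mono_group hle r)
  obtain ⟨N, hNpos, hN⟩ := doubling G hfinG
  have hO1 : (fun r : ℝ => (NCount G r : ℝ)) =O[atTop] (fun r : ℝ => (NCount Γ r : ℝ)) := by
    rw [isBigO_iff]
    refine ⟨1, Filter.Eventually.of_forall (fun r => ?_)⟩
    rw [Real.norm_natCast, Real.norm_natCast, one_mul]
    exact_mod_cast Set.ncard_le_ncard (SB_mono_group hle r) (hfinΓ r)
  constructor
  · intro hidx
    have hQfin : Finite (↥Γ ⧸ G.subgroupOf Γ) := (Nat.card_ne_zero.mp hidx).2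
    set R : Finset (Isom n) :=
      (Set.finite_range (fun q : ↥Γ ⧸ G.subgroupOf Γ => ((Quotient.out q : ↥Γ) : Isom n))).toFinset
      with hR
    have hbdd : BddAbove ((fun δ : Isom n => ‖tran δ‖) '' (R : Set (Isom n))) :=
      (R.finite_toSet.image _).bddAbove
    obtain ⟨a0, ha0⟩ := hbdd
    set a : ℝ := max a0 0 with ha
    have hanneg : 0 ≤ a := le_max_right _ _
    have haR : ∀ δ ∈ R, ‖tran δ‖ ≤ a := fun δ hδ =>
      le_trans (ha0 (Set.mem_image_of_mem _ hδ)) (le_max_left _ _)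
    have key : ∀ r : ℝ, (SB Γ r).ncard ≤ R.card * (SB G (r + a)).ncard := by
      intro r
      have hsub : SB Γ r ⊆ ⋃ δ ∈ R, (fun g => δ * g) '' SB G (r + a) := by
        intro γ hγ
        set γ' : ↥Γ := ⟨γ, hγ.1⟩ with hγ'
        set q := QuotientGroup.mk (s := G.subgroupOf Γ) γ' with hq
        set δ : Isom n := ((Quotient.out q : ↥Γ) : Isom n) with hδ
        have hδR : δ ∈ R := by
          rw [hR, Set.Finite.mem_toFinset]; exact ⟨q, rfl⟩
        have hg : δ⁻¹ * γ ∈ G := by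
          have h1 : ((Quotient.out q)⁻¹ * γ' : ↥Γ) ∈ G.subgroupOf Γ := by
            rw [← QuotientGroup.eq]
            exact Quotient.out_eq q
          rw [Subgroup.mem_subgroupOf] at h1
          have h2 : (((Quotient.out q)⁻¹ * γ' : ↥Γ) : Isom n) = δ⁻¹ * γ := by
            push_cast; rfl
          rwa [h2] at h1
        have htr : ‖tran (δ⁻¹ * γ)‖ ≤ r + a := by
          rw [tran_inv_mul]
          calc dist (δ 0) (γ 0) ≤ ‖δ 0‖ + ‖γ 0‖ := dist_le_norm_add_norm _ _
          _ ≤ a + r := add_le_add (haR δ hδR) hγ.2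
          _ = r + a := by ring
        refine Set.mem_biUnion hδR ⟨δ⁻¹ * γ, ⟨hg, htr⟩, ?_⟩
        show δ * (δ⁻¹ * γ) = γ
        rw [← mul_assoc, mul_inv_cancel, one_mul]
      have hUfin : (⋃ δ ∈ R, (fun g => δ * g) '' SB G (r + a)).Finite :=
        Set.Finite.biUnion R.finite_toSet (fun δ _ => (hfinG (r + a)).image _)
      calc (SB Γ r).ncard ≤ (⋃ δ ∈ R, (fun g => δ * g) '' SB G (r + a)).ncard :=
            Set.ncard_le_ncard hsub hUfin
      _ ≤ ∑ δ ∈ R, ((fun g => δ * g) '' SB G (r + a)).ncard := ncard_biUnion_le _ _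
      _ = ∑ _δ ∈ R, (SB G (r + a)).ncard := by
            apply Finset.sum_congr rfl
            intro δ _
            exact Set.ncard_image_of_injective _ (mul_right_injective δ)
      _ = R.card * (SB G (r + a)).ncard := by rw [Finset.sum_const, smul_eq_mul]
    refine ⟨hO1, ?_⟩
    rw [isBigO_iff]
    refine ⟨(R.card * N : ℕ), ?_⟩
    rw [eventually_atTop]
    refine ⟨max a 1, fun r hrge => ?_⟩
    have hr1 : (1:ℝ) ≤ r := le_trans (le_max_right _ _) hrge
    have hra : a ≤ r := le_trans (le_max_left _ _) hrge
    have hstep : (SB Γ r).ncard ≤ (R.card * N) * (SB G r).ncard := by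
      calc (SB Γ r).ncard ≤ R.card * (SB G (r + a)).ncard := key r
      _ ≤ R.card * (SB G (2 * r)).ncard :=
            Nat.mul_le_mul_left _ (Set.ncard_le_ncard (SB_mono G (by linarith)) (hfinG _))
      _ ≤ R.card * (N * (SB G r).ncard) := Nat.mul_le_mul_left _ (hN r (by linarith))
      _ = (R.card * N) * (SB G r).ncard := by ring
    rw [Real.norm_natCast, Real.norm_natCast, hNC, hNC]
    calc ((SB Γ r).ncard : ℝ) ≤ ((R.card * N) * (SB G r).ncard : ℕ) := by exact_mod_cast hstep
    _ = (R.card * N : ℕ) * ((SB G r).ncard : ℝ) := by push_cast; ring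
  · intro hTheta
    by_contra hidx
    have hQinf : Infinite (↥Γ ⧸ G.subgroupOf Γ) := by
      rcases Nat.card_eq_zero.mp hidx with h | h
      · exact absurd ⟨(QuotientGroup.mk (1 : ↥Γ) : ↥Γ ⧸ G.subgroupOf Γ)⟩ (not_nonempty_iff.mpr h)
      · exact h
    obtain ⟨c, hc⟩ := isBigO_iff.mp hTheta.2
    rw [eventually_atTop] at hc
    obtain ⟨r₀, hr₀⟩ := hc
    set m : ℕ := N * ⌈c⌉₊ + 1 with hm
    set emb := Infinite.natEmbedding (↥Γ ⧸ G.subgroupOf Γ) with hemb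
    set δ : Fin m → Isom n := fun i => ((Quotient.out (emb i) : ↥Γ) : Isom n) with hδ
    have hδΓ : ∀ i, δ i ∈ Γ := fun i => (Quotient.out (emb i) : ↥Γ).2
    have hdist : ∀ i j : Fin m, i ≠ j → ¬((δ i)⁻¹ * δ j ∈ G) := by
      intro i j hij hmem
      have h1 : ((Quotient.out (emb i))⁻¹ * (Quotient.out (emb j)) : ↥Γ) ∈ G.subgroupOf Γ := by
        rw [Subgroup.mem_subgroupOf]
        have h2 : (((Quotient.out (emb i))⁻¹ * (Quotient.out (emb j)) : ↥Γ) : Isom n)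
            = (δ i)⁻¹ * δ j := by push_cast; rfl
        rwa [h2]
      rw [← QuotientGroup.eq] at h1
      have e : ∀ q : ↥Γ ⧸ G.subgroupOf Γ, (QuotientGroup.mk (Quotient.out q) : ↥Γ ⧸ G.subgroupOf Γ) = q :=
        fun q => Quotient.out_eq q
      rw [e, e] at h1
      exact hij (Fin.val_injective (emb.injective h1))
    have hbdd : BddAbove (Set.range (fun i : Fin m => ‖tran (δ i)‖)) :=
      (Set.finite_range _).bddAbove
    obtain ⟨a0, ha0⟩ := hbdd
    set a : ℝ := max a0 0 with ha
    have hanneg : 0 ≤ a := le_max_right _ _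
    have haB : ∀ i, ‖tran (δ i)‖ ≤ a := fun i =>
      le_trans (ha0 (Set.mem_range_self i)) (le_max_left _ _)
    set r : ℝ := max (max a r₀) 1 with hr
    have hr1 : (1:ℝ) ≤ r := le_max_right _ _
    have hrpos : (0:ℝ) < r := lt_of_lt_of_le one_pos hr1
    have hra : a ≤ r := le_trans (le_max_left _ _) (le_max_left _ _)
    have hrr₀ : r₀ ≤ r := le_trans (le_max_right _ _) (le_max_left _ _)
    set A : Fin m → Set (Isom n) := fun i => (fun g => δ i * g) '' SB G r with hA
    have hAsub : ∀ i ∈ Finset.univ, A i ⊆ SB Γ (r + a) := by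
      intro i _
      rintro _ ⟨g, hg, rfl⟩
      refine ⟨mul_mem (hδΓ i) (hle hg.1), ?_⟩
      have h1 : tran (δ i * g) = δ i (g 0) := rfl
      rw [h1]
      have h2 : dist (δ i (g 0)) (δ i 0) = dist (g 0) 0 := (δ i).dist_eq _ _
      rw [← dist_zero_right]
      calc dist ((δ i) (g 0)) 0 ≤ dist ((δ i) (g 0)) ((δ i) 0) + dist ((δ i) 0) 0 :=
            dist_triangle _ _ _
      _ = dist (g 0) 0 + ‖(δ i) 0‖ := by simp [h2, dist_zero_right]
      _ ≤ r + a := by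
            rw [dist_zero_right]
            exact add_le_add hg.2 (haB i)
    have hAdisj : ∀ i ∈ Finset.univ, ∀ j ∈ Finset.univ, i ≠ j → Disjoint (A i) (A j) := by
      intro i _ j _ hij
      rw [Set.disjoint_left]
      rintro _ ⟨g, hg, rfl⟩ ⟨g', hg', heq⟩
      apply hdist i j hij
      change δ j * g' = δ i * g at heq
      have h3 : (δ i)⁻¹ * δ j = g * g'⁻¹ := by
        have h4 : (δ i)⁻¹ * (δ j * g') = g := by rw [heq, inv_mul_cancel_left]
        calc (δ i)⁻¹ * δ j = ((δ i)⁻¹ * (δ j * g')) * g'⁻¹ := by group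
        _ = g * g'⁻¹ := by rw [h4]
      rw [h3]
      exact mul_mem hg.1 (inv_mem hg'.1)
    have hsum : m * (SB G r).ncard ≤ (SB Γ (r + a)).ncard := by
      have h5 := sum_ncard_le Finset.univ A (SB Γ (r + a)) (hfinΓ _) hAsub hAdisj
      have h6 : ∀ i : Fin m, (A i).ncard = (SB G r).ncard := fun i =>
        Set.ncard_image_of_injective _ (mul_right_injective (δ i))
      calc m * (SB G r).ncard = ∑ i : Fin m, (A i).ncard := by
            simp [h6, Finset.sum_const, Finset.card_univ, smul_eq_mul]
      _ ≤ (SB Γ (r + a)).ncard := h5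
    have hge1 : 1 ≤ (SB G r).ncard :=
      (Set.ncard_pos (hfinG r)).mpr ⟨1, one_mem_SB G (le_of_lt hrpos)⟩
    have hcnn : (0:ℝ) ≤ c := by
      have := hr₀ r hrr₀
      have hpos : (0:ℝ) < ‖(NCount G r : ℝ)‖ := by
        rw [Real.norm_natCast, hNC]
        exact_mod_cast lt_of_lt_of_le Nat.one_pos hge1
      nlinarith [norm_nonneg ((NCount Γ r : ℝ))]
    -- main chain in ℝ
    have hchain : (m : ℝ) * (SB G r).ncard ≤ (c * N) * (SB G r).ncard := by
      have e1 : ((SB Γ (r + a)).ncard : ℝ) ≤ c * ((SB G (r + a)).ncard : ℝ) := by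
        have := hr₀ (r + a) (by linarith)
        rwa [Real.norm_natCast, Real.norm_natCast, hNC, hNC] at this
      have e2 : ((SB G (r + a)).ncard : ℝ) ≤ ((SB G (2 * r)).ncard : ℝ) := by
        exact_mod_cast Set.ncard_le_ncard (SB_mono G (by linarith)) (hfinG _)
      have e3 : ((SB G (2 * r)).ncard : ℝ) ≤ (N : ℝ) * (SB G r).ncard := by
        exact_mod_cast hN r hrpos
      have e0 : ((m : ℕ) * (SB G r).ncard : ℕ) ≤ ((SB Γ (r + a)).ncard : ℕ) := hsum
      have e0' : (m : ℝ) * ((SB G r).ncard : ℝ) ≤ ((SB Γ (r + a)).ncard : ℝ) := by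
        exact_mod_cast e0
      calc (m : ℝ) * (SB G r).ncard ≤ ((SB Γ (r + a)).ncard : ℝ) := e0'
      _ ≤ c * ((SB G (r + a)).ncard : ℝ) := e1
      _ ≤ c * ((SB G (2 * r)).ncard : ℝ) := by
            exact mul_le_mul_of_nonneg_left e2 hcnn
      _ ≤ c * ((N : ℝ) * (SB G r).ncard) := mul_le_mul_of_nonneg_left e3 hcnn
      _ = (c * N) * (SB G r).ncard := by ring
    have hx : (0:ℝ) < ((SB G r).ncard : ℝ) := by
      exact_mod_cast lt_of_lt_of_le Nat.one_pos hge1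
    have hfin : (m : ℝ) ≤ c * N := le_of_mul_le_mul_right (by linarith [hchain]) hx
    have hub : c * N ≤ (⌈c⌉₊ : ℝ) * N :=
      mul_le_mul_of_nonneg_right (Nat.le_ceil c) (Nat.cast_nonneg N)
    have : (m : ℝ) = (N : ℝ) * ⌈c⌉₊ + 1 := by rw [hm]; push_cast; ring
    linarith
end
end

section
/- Let Γ be a discrete subgroup of E(n), and let A = λA′ where A′ ∈ O(n) and λ > 0. Suppose that AΓA⁻¹ ⊆ Γ. Then AΓA⁻¹ is a subgroup of finite index in Γ. -/
open Metric Filter MeasureTheory Asymptotics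

noncomputable section

namespace ConjFI

open scoped ENNReal

variable {n : ℕ}

theorem abs_coord_le_norm (x : En n) (i : Fin n) : ‖x i‖ ≤ ‖x‖ := by
  rw [EuclideanSpace.norm_eq]
  have h1 : ‖x i‖ = Real.sqrt (‖x i‖ ^ 2) := by
    rw [Real.sqrt_sq (norm_nonneg _)]
  rw [h1]
  exact Real.sqrt_le_sqrt <| Finset.single_le_sum
    (f := fun j => ‖x j‖ ^ 2) (fun j _ => sq_nonneg _) (Finset.mem_univ i)

theorem tran_one : tran (1 : Isom n) = 0 := rfl

theorem tran_mul (α β : Isom n) : tran (α * β) = α (β 0) := rfl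

theorem norm_tran_mul_le (α β : Isom n) : ‖tran (α * β)‖ ≤ ‖tran α‖ + ‖tran β‖ := by
  rw [tran_mul]
  have h2 : dist (α (β 0)) (α 0) = dist (β 0) 0 := α.dist_eq _ _
  calc ‖α (β 0)‖ = dist (α (β 0)) 0 := (dist_zero_right _).symm
    _ ≤ dist (α (β 0)) (α 0) + dist (α 0) 0 := dist_triangle _ _ _
    _ = ‖tran β‖ + ‖tran α‖ := by
        rw [h2, dist_zero_right, dist_zero_right]; rfl
    _ = ‖tran α‖ + ‖tran β‖ := add_comm _ _

section conj

variable (A : En n ≃ₗ[ℝ] En n) {lam : ℝ} (hconf : ∀ x : En n, ‖A x‖ = lam * ‖x‖)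

include hconf

theorem dist_A (x y : En n) : dist (A x) (A y) = lam * dist x y := by
  rw [dist_eq_norm, dist_eq_norm, ← map_sub, hconf]

/-- Conjugation of an isometry by the conformal map `A`, as an isometry. -/
def conjIso (γ : Isom n) : Isom n where
  toEquiv := (A.symm.toEquiv.trans γ.toEquiv).trans A.toEquiv
  isometry_toFun := Isometry.of_dist_eq fun x y => by
    have h1 : dist (A (γ (A.symm x))) (A (γ (A.symm y)))
        = lam * dist (γ (A.symm x)) (γ (A.symm y)) := dist_A A hconf _ _
    have h2 : dist (γ (A.symm x)) (γ (A.symm y)) = dist (A.symm x) (A.symm y) :=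
      γ.dist_eq _ _
    have h3 : lam * dist (A.symm x) (A.symm y) = dist x y := by
      rw [← dist_A A hconf, A.apply_symm_apply, A.apply_symm_apply]
    show dist (A (γ (A.symm x))) (A (γ (A.symm y))) = dist x y
    rw [h1, h2, h3]

theorem conjIso_apply (γ : Isom n) (x : En n) :
    conjIso A hconf γ x = A (γ (A.symm x)) := rfl

theorem conjIso_mul (γ δ : Isom n) :
    conjIso A hconf (γ * δ) = conjIso A hconf γ * conjIso A hconf δ := by
  apply IsometryEquiv.ext
  intro x
  simp only [conjIso_apply, IsometryEquiv.mul_apply, A.symm_apply_apply]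


theorem conjIso_one : conjIso A hconf (1 : Isom n) = 1 := by
  apply IsometryEquiv.ext
  intro x
  simp only [conjIso_apply]
  show A (A.symm x) = x
  rw [A.apply_symm_apply]

theorem conjIso_inv (γ : Isom n) :
    conjIso A hconf γ⁻¹ = (conjIso A hconf γ)⁻¹ := by
  apply eq_inv_of_mul_eq_one_left
  rw [← conjIso_mul, inv_mul_cancel, conjIso_one]

theorem conjIso_inj : Function.Injective (conjIso A hconf) := by
  intro γ δ h
  apply IsometryEquiv.ext
  intro x
  have := congrArg (fun e : Isom n => e (A x)) h
  simp only [conjIso_apply, A.symm_apply_apply] at this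
  exact A.injective this

theorem tran_conjIso (γ : Isom n) : tran (conjIso A hconf γ) = A (tran γ) := by
  show conjIso A hconf γ 0 = A (γ 0)
  rw [conjIso_apply, map_zero]

theorem norm_tran_conjIso (γ : Isom n) :
    ‖tran (conjIso A hconf γ)‖ = lam * ‖tran γ‖ := by
  rw [tran_conjIso, hconf]

end conj

section word

variable (c : Isom n → Isom n)

/-- The word `g 0 * c (g 1) * c² (g 2) * ⋯`. -/
def word : (k : ℕ) → (Fin k → Isom n) → Isom n
  | 0, _ => 1
  | k + 1, g => g 0 * c (word k fun j => g j.succ)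

theorem word_mem {Γ : Subgroup (Isom n)} (hc : ∀ γ ∈ Γ, c γ ∈ Γ) :
    ∀ (k : ℕ) (g : Fin k → Isom n), (∀ j, g j ∈ Γ) → word c k g ∈ Γ
  | 0, _, _ => Γ.one_mem
  | k + 1, g, hg =>
    Γ.mul_mem (hg 0) (hc _ (word_mem hc k _ fun j => hg j.succ))

theorem word_tran {lam M : ℝ} (hlam : 0 ≤ lam) (hM : 0 ≤ M)
    (hc : ∀ γ, ‖tran (c γ)‖ = lam * ‖tran γ‖) :
    ∀ (k : ℕ) (g : Fin k → Isom n), (∀ j, ‖tran (g j)‖ ≤ M) →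
      ‖tran (word c k g)‖ ≤ M * ∑ j ∈ Finset.range k, lam ^ j := by
  intro k
  induction k with
  | zero =>
    intro g _
    simp [word, tran_one]
  | succ k ih =>
    intro g hg
    have hW := ih (fun j => g j.succ) (fun j => hg j.succ)
    calc ‖tran (word c (k + 1) g)‖
        ≤ ‖tran (g 0)‖ + ‖tran (c (word c k fun j => g j.succ))‖ :=
          norm_tran_mul_le _ _
      _ = ‖tran (g 0)‖ + lam * ‖tran (word c k fun j => g j.succ)‖ := by rw [hc]
      _ ≤ M + lam * (M * ∑ j ∈ Finset.range k, lam ^ j) :=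
          add_le_add (hg 0) (mul_le_mul_of_nonneg_left hW hlam)
      _ = M * ∑ j ∈ Finset.range (k + 1), lam ^ j := by
          rw [geom_sum_succ]; ring

theorem word_inj {Γ H : Subgroup (Isom n)} {m : ℕ} {g : Fin m → Isom n}
    (hchom : ∀ a b : Isom n, c (a * b) = c a * c b) (hcinj : Function.Injective c)
    (hcΓ : ∀ γ ∈ Γ, c γ ∈ Γ) (hcH : ∀ γ ∈ Γ, c γ ∈ H)
    (hg : ∀ i, g i ∈ Γ) (hcos : ∀ i j, (g j)⁻¹ * g i ∈ H → i = j) :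
    ∀ (k : ℕ) (σ σ' : Fin k → Fin m),
      word c k (g ∘ σ) = word c k (g ∘ σ') → σ = σ' := by
  have hc1 : c 1 = 1 := by
    have h := hchom 1 1
    rw [mul_one] at h
    have h2 : c 1 * 1 = c 1 * c 1 := by rw [mul_one]; exact h
    exact (mul_left_cancel h2).symm
  have hcinv : ∀ a : Isom n, c a⁻¹ = (c a)⁻¹ := fun a => by
    apply eq_inv_of_mul_eq_one_left
    rw [← hchom, inv_mul_cancel, hc1]
  intro k
  induction k with
  | zero => intro σ σ' _; funext i; exact i.elim0
  | succ k ih =>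
    intro σ σ' h
    set w := word c k (g ∘ σ ∘ Fin.succ) with hw
    set w' := word c k (g ∘ σ' ∘ Fin.succ) with hw'
    have hwΓ : w ∈ Γ := word_mem c hcΓ k _ fun j => hg _
    have hw'Γ : w' ∈ Γ := word_mem c hcΓ k _ fun j => hg _
    have h' : g (σ 0) * c w = g (σ' 0) * c w' := h
    have h00 : σ 0 = σ' 0 := by
      apply hcos
      have key : (g (σ' 0))⁻¹ * g (σ 0) = c (w' * w⁻¹) := by
        rw [hchom, hcinv]
        calc (g (σ' 0))⁻¹ * g (σ 0)
            = (g (σ' 0))⁻¹ * (g (σ 0) * c w) * (c w)⁻¹ := by group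
          _ = (g (σ' 0))⁻¹ * (g (σ' 0) * c w') * (c w)⁻¹ := by rw [h']
          _ = c w' * (c w)⁻¹ := by group
      rw [key]
      exact hcH _ (Γ.mul_mem hw'Γ (Γ.inv_mem hwΓ))
    have hww : w = w' := by
      apply hcinj
      apply mul_left_cancel (a := g (σ 0))
      rw [h', h00]
    have htail : σ ∘ Fin.succ = σ' ∘ Fin.succ := ih _ _ (by rw [← hw, ← hw', hww])
    funext i
    refine Fin.cases h00 (fun j => ?_) i
    exact congrFun htail j

end word

section packing

open Module

theorem packing {E : Type*} [NormedAddCommGroup E] [NormedSpace ℝ E]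
    [MeasurableSpace E] [BorelSpace E] [FiniteDimensional ℝ E]
    {P : Set E} {ε R : ℝ} (hε : 0 < ε) (hR : 0 ≤ R)
    (hP : ∀ p ∈ P, p ∈ Metric.closedBall (0 : E) R)
    (hsep : ∀ p ∈ P, ∀ q ∈ P, p ≠ q → ε ≤ dist p q) :
    P.Finite ∧ (P.ncard : ℝ) ≤ (3 * (R + ε) / ε) ^ finrank ℝ E := by
  set d := finrank ℝ E with hd
  have hbound : ∀ F : Finset E, ↑F ⊆ P → (F.card : ℝ) ≤ (3 * (R + ε) / ε) ^ d := by
    intro F hF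
    set μ := (finBasis ℝ E).addHaar with hμ
    have hdisj : (↑F : Set E).PairwiseDisjoint fun p => Metric.closedBall p (ε / 3) := by
      intro p hp q hq hpq
      apply closedBall_disjoint_closedBall
      have := hsep p (hF hp) q (hF hq) hpq
      linarith
    have hmeas : μ (⋃ p ∈ F, Metric.closedBall p (ε / 3))
        = ∑ p ∈ F, μ (Metric.closedBall p (ε / 3)) :=
      measure_biUnion_finset hdisj fun p _ => measurableSet_closedBall
    have hsub : (⋃ p ∈ F, Metric.closedBall p (ε / 3)) ⊆ Metric.closedBall (0 : E) (R + ε) := by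
      intro x hx
      simp only [Set.mem_iUnion] at hx
      obtain ⟨p, hp, hxp⟩ := hx
      rw [Metric.mem_closedBall] at hxp ⊢
      have h2 : dist p 0 ≤ R := hP p (hF hp)
      have h3 := dist_triangle x p 0
      linarith
    have hball : μ (Metric.closedBall (0 : E) (R + ε))
        = ENNReal.ofReal ((R + ε) ^ d) * μ (Metric.ball 0 1) :=
      Measure.addHaar_closedBall μ 0 (by linarith)
    have hsmall : ∀ p : E, μ (Metric.closedBall p (ε / 3))
        = ENNReal.ofReal ((ε / 3) ^ d) * μ (Metric.ball 0 1) :=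
      fun p => Measure.addHaar_closedBall μ p (by linarith)
    have hle : ((F.card : ℝ≥0∞) * ENNReal.ofReal ((ε / 3) ^ d)) * μ (Metric.ball (0:E) 1) ≤
        ENNReal.ofReal ((R + ε) ^ d) * μ (Metric.ball (0:E) 1) := by
      rw [← hball, mul_assoc]
      calc (F.card : ℝ≥0∞) * (ENNReal.ofReal ((ε / 3) ^ d) * μ (Metric.ball (0:E) 1))
          = ∑ _p ∈ F, (ENNReal.ofReal ((ε / 3) ^ d) * μ (Metric.ball (0:E) 1)) := by
            rw [Finset.sum_const, nsmul_eq_mul]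
        _ = ∑ p ∈ F, μ (Metric.closedBall p (ε / 3)) := by
            apply Finset.sum_congr rfl; intro p _; rw [hsmall]
        _ = μ (⋃ p ∈ F, Metric.closedBall p (ε / 3)) := hmeas.symm
        _ ≤ _ := measure_mono hsub
    have hμpos : μ (Metric.ball (0:E) 1) ≠ 0 := (measure_ball_pos μ 0 one_pos).ne'
    have hμtop : μ (Metric.ball (0:E) 1) ≠ ⊤ := measure_ball_lt_top.ne
    have hle2 : (F.card : ℝ≥0∞) * ENNReal.ofReal ((ε / 3) ^ d)
        ≤ ENNReal.ofReal ((R + ε) ^ d) :=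
      (ENNReal.mul_le_mul_iff_left hμpos hμtop).mp hle
    have h3 : (F.card : ℝ) * (ε / 3) ^ d ≤ (R + ε) ^ d := by
      rw [← ENNReal.ofReal_natCast, ← ENNReal.ofReal_mul (by positivity)] at hle2
      exact (ENNReal.ofReal_le_ofReal_iff (by positivity)).mp hle2
    have hpow : (0:ℝ) < (ε / 3) ^ d := by positivity
    calc (F.card : ℝ) = ((F.card : ℝ) * (ε / 3) ^ d) / (ε / 3) ^ d := by
          field_simp
      _ ≤ (R + ε) ^ d / (ε / 3) ^ d := by gcongr
      _ = (3 * (R + ε) / ε) ^ d := by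
          rw [← div_pow]
          congr 1
          field_simp
  have hfin : P.Finite := by
    by_contra hinf
    have hinf' : P.Infinite := hinf
    obtain ⟨F, hFP, hcard⟩ :=
      Set.Infinite.exists_subset_card_eq hinf' (⌈(3 * (R + ε) / ε) ^ d⌉₊ + 1)
    have h1 := hbound F hFP
    have h2 : (3 * (R + ε) / ε) ^ d ≤ (⌈(3 * (R + ε) / ε) ^ d⌉₊ : ℝ) := Nat.le_ceil _
    rw [hcard] at h1
    push_cast at h1
    linarith
  refine ⟨hfin, ?_⟩
  have := hbound hfin.toFinset (by simp)
  rwa [← Set.ncard_eq_toFinset_card P hfin] at this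
  
end packing

/-- The fingerprint of an isometry: images of the basis vectors and of `0`. -/
def psi (γ : Isom n) : (Fin n → En n) × En n :=
  (fun i => γ (EuclideanSpace.single i 1), γ 0)

theorem sep_psi {Γ : Subgroup (Isom n)} {ε : ℝ}
    (hd : ∀ γ ∈ Γ, γ ≠ 1 → ∃ x : En n, ‖x‖ ≤ 1 ∧ ε ≤ dist (γ x) x)
    {γ δ : Isom n} (hγ : γ ∈ Γ) (hδ : δ ∈ Γ) (hne : γ ≠ δ) :
    ε ≤ (2 * n + 1) * dist (psi γ) (psi δ) := by
  obtain ⟨x, hx1, hx2⟩ := hd (δ⁻¹ * γ) (Γ.mul_mem (Γ.inv_mem hδ) hγ)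
    (fun h => hne (inv_mul_eq_one.mp h).symm)
  set D := dist (psi γ) (psi δ) with hD
  have hD0 : ∀ i : Fin n, dist (γ (EuclideanSpace.single i 1)) (δ (EuclideanSpace.single i 1)) ≤ D := by
    intro i
    calc dist (γ (EuclideanSpace.single i 1)) (δ (EuclideanSpace.single i 1))
        ≤ dist (psi γ).1 (psi δ).1 := dist_le_pi_dist (psi γ).1 (psi δ).1 i
      _ ≤ D := le_max_left _ _
  have hD2 : ‖(γ 0 : En n) - δ 0‖ ≤ D := by
    rw [← dist_eq_norm]
    exact le_trans (le_max_right (dist (psi γ).1 (psi δ).1) _) le_rfl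
  have hdist : dist ((δ⁻¹ * γ) x) x = dist (γ x) (δ x) := by
    have h1 : ((δ⁻¹ * γ) x : En n) = δ.symm (γ x) := rfl
    rw [h1, ← δ.dist_eq (δ.symm (γ x)) x, δ.apply_symm_apply]
  set f := γ.toRealLinearIsometryEquiv with hf
  set g := δ.toRealLinearIsometryEquiv with hg
  have hfy : ∀ y, (f y : En n) = γ y - γ 0 := fun y => γ.toRealLinearIsometryEquiv_apply y
  have hgy : ∀ y, (g y : En n) = δ y - δ 0 := fun y => δ.toRealLinearIsometryEquiv_apply y
  have hx_repr : ∑ i : Fin n, x i • (EuclideanSpace.single i (1:ℝ) : En n) = x := by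
    have h := (EuclideanSpace.basisFun (Fin n) ℝ).toBasis.sum_repr x
    simpa [OrthonormalBasis.coe_toBasis, OrthonormalBasis.coe_toBasis_repr_apply,
      EuclideanSpace.basisFun_repr, EuclideanSpace.basisFun_apply] using h
  have hfg : ‖(f x : En n) - g x‖
      ≤ ∑ i : Fin n, ‖(f (EuclideanSpace.single i 1) : En n) - g (EuclideanSpace.single i 1)‖ := by
    have h1 : (f x : En n) - g x
        = ∑ i : Fin n, x i • ((f (EuclideanSpace.single i 1) : En n) - g (EuclideanSpace.single i 1)) := by
      conv_lhs => rw [← hx_repr]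
      rw [map_sum, map_sum, ← Finset.sum_sub_distrib]
      apply Finset.sum_congr rfl
      intro i _
      rw [LinearIsometryEquiv.map_smul, LinearIsometryEquiv.map_smul, smul_sub]
    rw [h1]
    calc ‖∑ i : Fin n, x i • ((f (EuclideanSpace.single i 1) : En n) - g (EuclideanSpace.single i 1))‖
        ≤ ∑ i : Fin n, ‖x i • ((f (EuclideanSpace.single i 1) : En n) - g (EuclideanSpace.single i 1))‖ :=
          norm_sum_le _ _
      _ ≤ ∑ i : Fin n, ‖(f (EuclideanSpace.single i 1) : En n) - g (EuclideanSpace.single i 1)‖ := by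
          apply Finset.sum_le_sum
          intro i _
          rw [norm_smul]
          have h2 : ‖x i‖ ≤ 1 := le_trans (abs_coord_le_norm x i) hx1
          exact mul_le_of_le_one_left (norm_nonneg _) h2
  have hei : ∀ i : Fin n,
      ‖(f (EuclideanSpace.single i 1) : En n) - g (EuclideanSpace.single i 1)‖ ≤ 2 * D := by
    intro i
    rw [hfy, hgy]
    calc ‖(γ (EuclideanSpace.single i 1) - γ 0) - (δ (EuclideanSpace.single i 1) - δ 0)‖
        = ‖(γ (EuclideanSpace.single i 1) - δ (EuclideanSpace.single i 1)) - (γ 0 - δ 0)‖ := by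
          congr 1; abel
      _ ≤ ‖γ (EuclideanSpace.single i 1) - δ (EuclideanSpace.single i 1)‖ + ‖(γ 0 : En n) - δ 0‖ :=
          norm_sub_le _ _
      _ ≤ D + D := by
          refine add_le_add ?_ hD2
          rw [← dist_eq_norm]; exact hD0 i
      _ = 2 * D := by ring
  have hkey : dist (γ x) (δ x) ≤ (2 * n + 1) * D := by
    have h1 : (γ x : En n) - δ x = ((f x : En n) - g x) + (γ 0 - δ 0) := by
      rw [hfy, hgy]; abel
    calc dist (γ x) (δ x) = ‖(γ x : En n) - δ x‖ := dist_eq_norm _ _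
      _ = ‖((f x : En n) - g x) + (γ 0 - δ 0)‖ := by rw [h1]
      _ ≤ ‖(f x : En n) - g x‖ + ‖(γ 0 : En n) - δ 0‖ := norm_add_le _ _
      _ ≤ (∑ _i : Fin n, 2 * D) + D := by
          refine add_le_add (le_trans hfg ?_) hD2
          exact Finset.sum_le_sum fun i _ => hei i
      _ = (2 * n + 1) * D := by
          rw [Finset.sum_const, Finset.card_univ, Fintype.card_fin, nsmul_eq_mul]
          ring
  rw [hdist] at hx2
  linarith

theorem Sfin {Γ : Subgroup (Isom n)} {ε : ℝ} (hε : 0 < ε)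
    (hd : ∀ γ ∈ Γ, γ ≠ 1 → ∃ x : En n, ‖x‖ ≤ 1 ∧ ε ≤ dist (γ x) x)
    (r : ℝ) (hr : 0 ≤ r) :
    {γ : Isom n | γ ∈ Γ ∧ ‖tran γ‖ ≤ r}.Finite ∧
      ({γ : Isom n | γ ∈ Γ ∧ ‖tran γ‖ ≤ r}.ncard : ℝ)
        ≤ (3 * ((r + 1) + ε / (2 * n + 1)) / (ε / (2 * n + 1)))
            ^ (Module.finrank ℝ ((Fin n → En n) × En n)) := by
  set S := {γ : Isom n | γ ∈ Γ ∧ ‖tran γ‖ ≤ r} with hS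
  have hn1 : (0:ℝ) < 2 * n + 1 := by positivity
  have hε0 : 0 < ε / (2 * n + 1) := by positivity
  have hinj : Set.InjOn psi S := by
    intro γ hγ δ hδ h
    by_contra hne
    have := sep_psi hd hγ.1 hδ.1 hne
    rw [h, dist_self, mul_zero] at this
    linarith
  have hmem : ∀ p ∈ psi '' S, p ∈ Metric.closedBall (0 : (Fin n → En n) × En n) (r + 1) := by
    rintro p ⟨γ, hγ, rfl⟩
    rw [Metric.mem_closedBall, dist_zero_right, Prod.norm_def]
    apply max_le
    · rw [pi_norm_le_iff_of_nonneg (by linarith)]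
      intro i
      have h1 : dist (γ (EuclideanSpace.single i 1)) (γ 0)
          = dist (EuclideanSpace.single i (1:ℝ)) 0 := γ.dist_eq _ _
      have h2 : dist (EuclideanSpace.single i (1:ℝ)) (0 : En n) = 1 := by
        rw [dist_zero_right, EuclideanSpace.norm_single]; norm_num
      have h3 := dist_triangle (γ (EuclideanSpace.single i 1)) (γ 0) 0
      have h4 : dist (γ 0 : En n) 0 ≤ r := by rw [dist_zero_right]; exact hγ.2
      have h5 : ‖(psi γ).1 i‖ = dist (γ (EuclideanSpace.single i 1)) 0 := by
        rw [dist_zero_right]; rfl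
      rw [h5]
      rw [h1, h2] at h3
      linarith
    · have h6 : ‖(psi γ).2‖ ≤ r := hγ.2
      linarith
  have hsepP : ∀ p ∈ psi '' S, ∀ q ∈ psi '' S, p ≠ q → ε / (2 * n + 1) ≤ dist p q := by
    rintro p ⟨γ, hγ, rfl⟩ q ⟨δ, hδ, rfl⟩ hpq
    have hne : γ ≠ δ := fun h => hpq (by rw [h])
    have := sep_psi hd hγ.1 hδ.1 hne
    rw [div_le_iff₀ hn1]
    linarith [this]
  obtain ⟨hfinP, hcardP⟩ := packing hε0 (by linarith : (0:ℝ) ≤ r + 1) hmem hsepP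
  refine ⟨Set.Finite.of_finite_image hfinP hinj, ?_⟩
  rwa [← Set.ncard_image_of_injOn hinj]

end ConjFI


/-- Let `Γ ≤ E(n)` be discrete and `A = λA'` a linear conformal bijection
with `A' ∈ O(n)`, `λ > 0`. If `AΓA⁻¹ ⊆ Γ`, then `AΓA⁻¹` is a subgroup of finite index in `Γ`. -/
theorem conjugation_finite_index {n : ℕ} (Γ : Subgroup (Isom n))
    (hΓ : IsDiscreteSubgroup Γ) (A : En n ≃ₗ[ℝ] En n) (lam : ℝ)
    (hlam : 0 < lam) (hconf : ∀ x : En n, ‖A x‖ = lam * ‖x‖)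
    (hconj : ∀ γ ∈ Γ, ∃ γ' ∈ Γ, ∀ x : En n, γ' x = A (γ (A.symm x))) :
    ∃ H : Subgroup (Isom n), H ≤ Γ ∧
      (∀ δ : Isom n, δ ∈ H ↔ ∃ γ ∈ Γ, ∀ x : En n, δ x = A (γ (A.symm x))) ∧
      H.relIndex Γ ≠ 0 := by
  classical
  obtain ⟨ε, hε, hd⟩ := hΓ
  set c := ConjFI.conjIso A hconf with hcdef
  have hchom : ∀ a b : Isom n, c (a * b) = c a * c b := ConjFI.conjIso_mul A hconf
  have hcinj : Function.Injective c := ConjFI.conjIso_inj A hconf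
  have hctran : ∀ γ : Isom n, ‖tran (c γ)‖ = lam * ‖tran γ‖ :=
    ConjFI.norm_tran_conjIso A hconf
  have hcone : c 1 = 1 := ConjFI.conjIso_one A hconf
  have hcinv : ∀ γ : Isom n, c γ⁻¹ = (c γ)⁻¹ := ConjFI.conjIso_inv A hconf
  set H : Subgroup (Isom n) :=
    { carrier := {δ : Isom n | ∃ γ ∈ Γ, δ = c γ}
      one_mem' := ⟨1, Γ.one_mem, hcone.symm⟩
      mul_mem' := by
        rintro a b ⟨γ₁, h1, rfl⟩ ⟨γ₂, h2, rfl⟩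
        exact ⟨γ₁ * γ₂, Γ.mul_mem h1 h2, (hchom γ₁ γ₂).symm⟩
      inv_mem' := by
        rintro a ⟨γ, hγ, rfl⟩
        exact ⟨γ⁻¹, Γ.inv_mem hγ, (hcinv γ).symm⟩ } with hHdef
  have hmemH : ∀ δ : Isom n, δ ∈ H ↔ ∃ γ ∈ Γ, δ = c γ := fun δ => Iff.rfl
  have hcΓ : ∀ γ ∈ Γ, c γ ∈ Γ := by
    intro γ hγ
    obtain ⟨γ', hγ', hfun⟩ := hconj γ hγ
    have heq : γ' = c γ := IsometryEquiv.ext hfun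
    rwa [← heq]
  have hcH : ∀ γ ∈ Γ, c γ ∈ H := fun γ hγ => ⟨γ, hγ, rfl⟩
  have hHle : H ≤ Γ := by
    rintro δ ⟨γ, hγ, rfl⟩
    exact hcΓ γ hγ
  have hHiff : ∀ δ : Isom n, δ ∈ H ↔ ∃ γ ∈ Γ, ∀ x : En n, δ x = A (γ (A.symm x)) := by
    intro δ
    constructor
    · rintro ⟨γ, hγ, rfl⟩
      exact ⟨γ, hγ, fun x => rfl⟩
    · rintro ⟨γ, hγ, hx⟩
      exact ⟨γ, hγ, IsometryEquiv.ext hx⟩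
  refine ⟨H, hHle, hHiff, ?_⟩
  by_cases hlam1 : lam ≤ 1
  · -- contracting or isometric case: H = Γ
    have hΓle : Γ ≤ H := by
      intro γ hγ
      set r := ‖tran γ‖ with hr
      have hr0 : 0 ≤ r := norm_nonneg _
      set S := {δ : Isom n | δ ∈ Γ ∧ ‖tran δ‖ ≤ r} with hS
      have hfin : S.Finite := (ConjFI.Sfin hε hd r hr0).1
      have hmapsto : Set.MapsTo c S S := by
        rintro δ ⟨h1, h2⟩
        refine ⟨hcΓ δ h1, ?_⟩
        rw [hctran]
        nlinarith [norm_nonneg (tran δ)]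
      have hbij := (hfin.injOn_iff_bijOn_of_mapsTo hmapsto).mp hcinj.injOn
      obtain ⟨δ, hδS, hδγ⟩ := hbij.surjOn ⟨hγ, le_refl r⟩
      exact ⟨δ, hδS.1, hδγ.symm⟩
    have hHG : H = Γ := le_antisymm hHle hΓle
    rw [hHG, Subgroup.relIndex_self]
    exact one_ne_zero
  · push_neg at hlam1
    intro h0
    have h0' : (H.subgroupOf Γ).index = 0 := h0
    have hinf : Infinite (↥Γ ⧸ H.subgroupOf Γ) :=
      Subgroup.index_eq_zero_iff_infinite.mp h0'
    set d := Module.finrank ℝ ((Fin n → En n) × En n) with hdim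
    set m := ⌈lam ^ d⌉₊ + 1 with hm
    obtain emb := Infinite.natEmbedding (↥Γ ⧸ H.subgroupOf Γ)
    set q : Fin m → ↥Γ ⧸ H.subgroupOf Γ := fun i => emb i.val with hq
    have hqinj : Function.Injective q := by
      intro i j hij
      exact Fin.ext (emb.injective hij)
    choose γb hγb using fun i : Fin m => QuotientGroup.mk_surjective (q i)
    set g : Fin m → Isom n := fun i => (γb i : Isom n) with hgdef
    have hgΓ : ∀ i, g i ∈ Γ := fun i => (γb i).2
    have hcos : ∀ i j, (g j)⁻¹ * g i ∈ H → i = j := by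
      intro i j hij
      have h1 : (γb j)⁻¹ * γb i ∈ H.subgroupOf Γ := by
        rw [Subgroup.mem_subgroupOf]
        exact hij
      have h2 : (QuotientGroup.mk (γb j) : ↥Γ ⧸ H.subgroupOf Γ) = QuotientGroup.mk (γb i) :=
        (QuotientGroup.eq).mpr h1
      rw [hγb i, hγb j] at h2
      exact (hqinj h2).symm
    set M := ∑ i, ‖tran (g i)‖ with hMdef
    have hM0 : 0 ≤ M := Finset.sum_nonneg fun i _ => norm_nonneg _
    have hMg : ∀ i, ‖tran (g i)‖ ≤ M :=
      fun i => Finset.single_le_sum (fun j _ => norm_nonneg (tran (g j))) (Finset.mem_univ i)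
    set ε₀ := ε / (2 * n + 1) with hε₀def
    have hε₀ : 0 < ε₀ := by positivity
    have hcount : ∀ k : ℕ, ((m : ℝ)) ^ k ≤
        (3 * ((M * ∑ j ∈ Finset.range k, lam ^ j + 1) + ε₀) / ε₀) ^ d := by
      intro k
      set R := M * ∑ j ∈ Finset.range k, lam ^ j with hR
      have hR0 : 0 ≤ R :=
        mul_nonneg hM0 (Finset.sum_nonneg fun j _ => pow_nonneg (le_of_lt hlam) j)
      obtain ⟨hSfin, hScard⟩ := ConjFI.Sfin hε hd R hR0
      have hword_mem : ∀ σ : Fin k → Fin m,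
          ConjFI.word c k (g ∘ σ) ∈ {γ : Isom n | γ ∈ Γ ∧ ‖tran γ‖ ≤ R} := fun σ =>
        ⟨ConjFI.word_mem c hcΓ k _ fun j => hgΓ _,
         ConjFI.word_tran c (le_of_lt hlam) hM0 hctran k _ fun j => hMg _⟩
      have hwinj : Function.Injective fun σ : Fin k → Fin m => ConjFI.word c k (g ∘ σ) :=
        fun σ σ' h => ConjFI.word_inj c hchom hcinj hcΓ hcH hgΓ hcos k σ σ' h
      have h1 : (Set.range fun σ : Fin k → Fin m => ConjFI.word c k (g ∘ σ))
          ⊆ {γ : Isom n | γ ∈ Γ ∧ ‖tran γ‖ ≤ R} := by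
        rintro _ ⟨σ, rfl⟩
        exact hword_mem σ
      have h2 : (Set.range fun σ : Fin k → Fin m => ConjFI.word c k (g ∘ σ)).ncard = m ^ k := by
        rw [← Set.image_univ, Set.ncard_image_of_injOn hwinj.injOn, Set.ncard_univ,
          Nat.card_eq_fintype_card, Fintype.card_fun, Fintype.card_fin, Fintype.card_fin]
      have h3 : m ^ k ≤ {γ : Isom n | γ ∈ Γ ∧ ‖tran γ‖ ≤ R}.ncard :=
        h2 ▸ Set.ncard_le_ncard h1 hSfin
      calc ((m : ℝ)) ^ k = ((m ^ k : ℕ) : ℝ) := by push_cast; ring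
        _ ≤ ({γ : Isom n | γ ∈ Γ ∧ ‖tran γ‖ ≤ R}.ncard : ℝ) := by exact_mod_cast h3
        _ ≤ _ := hScard
    set K := (3 / ε₀) * (M / (lam - 1) + 1 + ε₀) with hK
    have hlam0 : (0:ℝ) < lam - 1 := by linarith
    have hKpos : 0 < K := by positivity
    have hbig : ∀ k : ℕ, ((m : ℝ) / lam ^ d) ^ k ≤ K ^ d := by
      intro k
      have hlamk : (1:ℝ) ≤ lam ^ k := one_le_pow₀ hlam1.le
      have hsum0 : 0 ≤ ∑ j ∈ Finset.range k, lam ^ j :=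
        Finset.sum_nonneg fun j _ => pow_nonneg hlam.le j
      have hgeom : ∑ j ∈ Finset.range k, lam ^ j ≤ lam ^ k / (lam - 1) := by
        rw [geom_sum_eq (ne_of_gt hlam1) k]
        gcongr
        linarith
      have hMs : M * ∑ j ∈ Finset.range k, lam ^ j ≤ M / (lam - 1) * lam ^ k := by
        calc M * ∑ j ∈ Finset.range k, lam ^ j ≤ M * (lam ^ k / (lam - 1)) :=
              mul_le_mul_of_nonneg_left hgeom hM0
          _ = M / (lam - 1) * lam ^ k := by ring
      have hone : (1:ℝ) + ε₀ ≤ (1 + ε₀) * lam ^ k := by nlinarith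
      have hsum : (M * ∑ j ∈ Finset.range k, lam ^ j + 1) + ε₀
          ≤ (M / (lam - 1) + 1 + ε₀) * lam ^ k := by nlinarith
      have h5 : 3 * ((M * ∑ j ∈ Finset.range k, lam ^ j + 1) + ε₀) / ε₀ ≤ K * lam ^ k := by
        have e1 : 3 * ((M * ∑ j ∈ Finset.range k, lam ^ j + 1) + ε₀) / ε₀
            = (3 / ε₀) * ((M * ∑ j ∈ Finset.range k, lam ^ j + 1) + ε₀) := by ring
        rw [e1]
        calc (3 / ε₀) * ((M * ∑ j ∈ Finset.range k, lam ^ j + 1) + ε₀)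
            ≤ (3 / ε₀) * ((M / (lam - 1) + 1 + ε₀) * lam ^ k) :=
              mul_le_mul_of_nonneg_left hsum (by positivity)
          _ = K * lam ^ k := by rw [hK]; ring
      have hbase : 0 ≤ 3 * ((M * ∑ j ∈ Finset.range k, lam ^ j + 1) + ε₀) / ε₀ := by
        apply div_nonneg _ hε₀.le
        have := mul_nonneg hM0 hsum0
        linarith
      have h7 : ((m : ℝ)) ^ k ≤ (K * lam ^ k) ^ d :=
        (hcount k).trans (pow_le_pow_left₀ hbase h5 d)
      have h8 : (K * lam ^ k) ^ d = K ^ d * (lam ^ d) ^ k := by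
        rw [mul_pow, ← pow_mul, ← pow_mul, mul_comm k d]
      rw [div_pow, div_le_iff₀ (by positivity : (0:ℝ) < (lam ^ d) ^ k)]
      rw [h8] at h7
      exact h7
    have hx : 1 < (m : ℝ) / lam ^ d := by
      rw [lt_div_iff₀ (by positivity : (0:ℝ) < lam ^ d), one_mul]
      calc lam ^ d ≤ (⌈lam ^ d⌉₊ : ℝ) := Nat.le_ceil _
        _ < (m : ℝ) := by rw [hm]; push_cast; linarith
    obtain ⟨k, hk⟩ := pow_unbounded_of_one_lt (K ^ d) hx
    exact absurd (hbig k) (not_le.mpr hk)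
end
end

section
/- Let Γ be a discrete subgroup of E(n), let (G, V) be a finite index cocompact translation pair of Γ, and let A = λA′ where A′ ∈ O(n) and λ > 0. Suppose that AΓA⁻¹ ⊆ Γ. Then there exists a ∈ ℝⁿ such that AV = V + a; in particular the affine subspace AV is parallel to V. -/
open Metric Filter MeasureTheory Asymptotics

noncomputable section

lemma aux_mem_of_approx {E : Type*} [NormedAddCommGroup E] [NormedSpace ℝ E]
    [FiniteDimensional ℝ E] (s : Submodule ℝ E) (x : E) (C : ℝ)
    (h : ∀ k : ℕ, 0 < k → ∃ w ∈ s, ‖(k : ℝ) • x - w‖ ≤ C) : x ∈ s := by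
  have hs : IsClosed (s : Set E) := s.closed_of_finiteDimensional
  have hx : x ∈ closure (s : Set E) := by
    rw [Metric.mem_closure_iff]
    intro ε hε
    obtain ⟨k0, hk0⟩ := exists_nat_gt (C / ε)
    set k := k0 + 1 with hkdef
    have hkpos : 0 < k := Nat.succ_pos _
    obtain ⟨w, hw, hwd⟩ := h k hkpos
    refine ⟨(k : ℝ)⁻¹ • w, Submodule.smul_mem s _ hw, ?_⟩
    have hk : (0:ℝ) < (k:ℝ) := by exact_mod_cast hkpos
    have hCk : C < (k:ℝ) * ε := by
      have h1 : C / ε < (k:ℝ) :=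
        lt_of_le_of_lt (le_of_lt hk0) (by exact_mod_cast Nat.lt_succ_self k0)
      calc C = (C / ε) * ε := by field_simp
        _ < (k:ℝ) * ε := mul_lt_mul_of_pos_right h1 hε
    have heq : dist x ((k : ℝ)⁻¹ • w) = (k:ℝ)⁻¹ * ‖(k:ℝ) • x - w‖ := by
      rw [dist_eq_norm, ← norm_smul_of_nonneg (by positivity : (0:ℝ) ≤ (k:ℝ)⁻¹)]
      congr 1
      rw [smul_sub, inv_smul_smul₀ (ne_of_gt hk)]
    rw [heq]
    calc (k:ℝ)⁻¹ * ‖(k:ℝ) • x - w‖ ≤ (k:ℝ)⁻¹ * C :=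
          mul_le_mul_of_nonneg_left hwd (by positivity)
      _ < ε := by
          rw [inv_mul_lt_iff₀ hk]
          linarith
  rwa [← SetLike.mem_coe, ← hs.closure_eq]

lemma aux_pow_translate {n : ℕ} {G : Subgroup (Isom n)} {V : AffineSubspace ℝ (En n)}
    (hinv : ∀ g ∈ G, ∀ x ∈ (V : Set (En n)), g x ∈ (V : Set (En n)))
    {g : Isom n} (hg : g ∈ G) {v : En n} (hgv : ∀ x ∈ (V : Set (En n)), g x = x + v)
    (k : ℕ) : ∀ x ∈ (V : Set (En n)), (g ^ k) x = x + (k : ℝ) • v := by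
  induction k with
  | zero => intro x hx; simp
  | succ k ih =>
    intro x hx
    have hx' : g x ∈ (V : Set (En n)) := hinv g hg x hx
    have h1 : (g ^ (k+1)) x = (g ^ k) (g x) := by rw [pow_succ]; rfl
    rw [h1, ih (g x) hx', hgv x hx]
    push_cast
    rw [add_smul, one_smul]
    abel

lemma aux_conj_pow {n : ℕ} (A : En n ≃ₗ[ℝ] En n) {γ γ' : Isom n}
    (h : ∀ x, γ' x = A (γ (A.symm x))) (k : ℕ) (x : En n) :
    (γ' ^ k) x = A ((γ ^ k) (A.symm x)) := by
  induction k generalizing x with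
  | zero => simp
  | succ k ih =>
    have h1 : (γ' ^ (k+1)) x = γ' ((γ' ^ k) x) := by rw [pow_succ']; rfl
    have h2 : (γ ^ (k+1)) (A.symm x) = γ ((γ ^ k) (A.symm x)) := by rw [pow_succ']; rfl
    rw [h1, h2, ih, h, A.symm_apply_apply]

/-- Let `(G, V)` be a finite index cocompact translation pair of a discrete
`Γ ≤ E(n)`, and `A = λA'` linear conformal with `λ > 0` and `AΓA⁻¹ ⊆ Γ`. Then `AV = V + a`
for some `a ∈ ℝⁿ`. -/
theorem conjugation_maps_V_parallel {n : ℕ} (Γ G : Subgroup (Isom n))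
    (V : AffineSubspace ℝ (En n)) (hΓ : IsDiscreteSubgroup Γ)
    (hpair : IsCocompactTranslationPair Γ G V) (hfin : G.relIndex Γ ≠ 0)
    (A : En n ≃ₗ[ℝ] En n) (lam : ℝ) (hlam : 0 < lam)
    (hconf : ∀ x : En n, ‖A x‖ = lam * ‖x‖)
    (hconj : ∀ γ ∈ Γ, ∃ γ' ∈ Γ, ∀ x : En n, γ' x = A (γ (A.symm x))) :
    ∃ a : En n, (fun x => A x) '' (V : Set (En n)) = (fun x => x + a) '' (V : Set (En n)) := by
  classical
  obtain ⟨p, hp⟩ := hpair.nonempty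
  set W : Submodule ℝ (En n) := V.direction with hWdef
  set d : ℝ := ‖p - A p‖ with hddef
  have hd0 : 0 ≤ d := norm_nonneg _
  -- Key bound: the image of a translation vector is within 2d of W.
  have key : ∀ v : En n, (∃ g ∈ G, ∀ x ∈ (V : Set (En n)), g x = x + v) →
      ∃ w ∈ W, ‖A v - w‖ ≤ 2 * d := by
    rintro v ⟨g, hg, hgv⟩
    obtain ⟨γ', hγ'Γ, hγ'⟩ := hconj g (hpair.le hg)
    obtain ⟨m, hm0, -, hmem⟩ := Subgroup.exists_pow_mem_of_relIndex_ne_zero hfin hγ'Γ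
    have hmemG : γ' ^ m ∈ G := hmem.1
    obtain ⟨u, hu⟩ := hpair.translation _ hmemG
    have hpu : (γ' ^ m) p = p + u := hu p hp
    have huW : u ∈ W := by
      have h1 : (γ' ^ m) p ∈ (V : Set (En n)) := hpair.invariant _ hmemG p hp
      have h2 := AffineSubspace.vsub_mem_direction h1 hp
      rw [hpu] at h2
      simpa using h2
    have hAp : (γ' ^ m) (A p) = A p + (m : ℝ) • A v := by
      rw [aux_conj_pow A hγ' m (A p), A.symm_apply_apply,
        aux_pow_translate hpair.invariant hg hgv m p hp, map_add, _root_.map_smul]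
    have hiso : dist ((γ' ^ m) p) ((γ' ^ m) (A p)) = dist p (A p) :=
      (γ' ^ m).dist_eq p (A p)
    rw [hpu, hAp] at hiso
    have h1 : ‖p + u - (A p + (m:ℝ) • A v)‖ = d := by
      rw [← dist_eq_norm, hiso, dist_eq_norm]
    have hbound : ‖u - (m:ℝ) • A v‖ ≤ 2 * d := by
      have heq : u - (m:ℝ) • A v = (p + u - (A p + (m:ℝ) • A v)) + (A p - p) := by abel
      rw [heq]
      calc ‖(p + u - (A p + (m:ℝ) • A v)) + (A p - p)‖
          ≤ ‖p + u - (A p + (m:ℝ) • A v)‖ + ‖A p - p‖ := norm_add_le _ _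
        _ = d + d := by rw [h1, norm_sub_rev]
        _ = 2 * d := by ring
    have hm : (0:ℝ) < (m:ℝ) := by exact_mod_cast hm0
    refine ⟨(m:ℝ)⁻¹ • u, Submodule.smul_mem _ _ huW, ?_⟩
    have heq2 : A v - (m:ℝ)⁻¹ • u = -((m:ℝ)⁻¹ • (u - (m:ℝ) • A v)) := by
      rw [smul_sub, inv_smul_smul₀ hm.ne']
      abel
    rw [heq2, norm_neg, norm_smul, Real.norm_eq_abs, abs_of_pos (by positivity)]
    calc (m:ℝ)⁻¹ * ‖u - (m:ℝ) • A v‖ ≤ 1 * (2 * d) := by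
          apply mul_le_mul _ hbound (norm_nonneg _) zero_le_one
          rw [inv_le_one_iff₀]
          right
          exact_mod_cast hm0
      _ = 2 * d := one_mul _
  -- A maps translation vectors into W.
  have keyW : ∀ v : En n, (∃ g ∈ G, ∀ x ∈ (V : Set (En n)), g x = x + v) → A v ∈ W := by
    rintro v hv
    apply aux_mem_of_approx W (A v) (2 * d)
    intro k hk
    obtain ⟨g, hg, hgv⟩ := hv
    obtain ⟨w, hw, hwd⟩ := key ((k:ℝ) • v)
      ⟨g ^ k, pow_mem hg k, aux_pow_translate hpair.invariant hg hgv k⟩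
    rw [_root_.map_smul] at hwd
    exact ⟨w, hw, hwd⟩
  -- The translation vectors span W.
  set Lset : Set (En n) := {v | ∃ g ∈ G, ∀ x ∈ (V : Set (En n)), g x = x + v} with hLdef
  have hWS : W ≤ Submodule.span ℝ Lset := by
    intro w hw
    obtain ⟨K, hKc, hKV, hKcov⟩ := hpair.cocompact
    obtain ⟨R, hR⟩ := hKc.isBounded.subset_closedBall 0
    apply aux_mem_of_approx _ w (R + ‖p‖)
    intro k hk
    have hx : (k:ℝ) • w + p ∈ (V : Set (En n)) := by
      have := AffineSubspace.vadd_mem_of_mem_direction (Submodule.smul_mem W ((k:ℝ)) hw) hp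
      simpa using this
    obtain ⟨g, hg, hgK⟩ := hKcov _ hx
    obtain ⟨v, hv⟩ := hpair.translation g hg
    have hLv : v ∈ Lset := ⟨g, hg, hv⟩
    refine ⟨-v, Submodule.neg_mem _ (Submodule.subset_span hLv), ?_⟩
    have hgval : g ((k:ℝ) • w + p) = (k:ℝ) • w + p + v := hv _ hx
    have hnorm : ‖(k:ℝ) • w + p + v‖ ≤ R := by
      have h2 := hR hgK
      rw [hgval] at h2
      exact mem_closedBall_zero_iff.mp h2
    have heq : (k:ℝ) • w - -v = ((k:ℝ) • w + p + v) + (-p) := by abel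
    rw [heq]
    calc ‖((k:ℝ) • w + p + v) + (-p)‖ ≤ ‖(k:ℝ) • w + p + v‖ + ‖-p‖ := norm_add_le _ _
      _ ≤ R + ‖p‖ := by rw [norm_neg]; exact add_le_add_left hnorm _
  have hSW : Submodule.span ℝ Lset ≤ W := by
    rw [Submodule.span_le]
    rintro v ⟨g, hg, hgv⟩
    have h1 : g p ∈ (V : Set (En n)) := hpair.invariant g hg p hp
    have h2 := AffineSubspace.vsub_mem_direction h1 hp
    rw [hgv p hp] at h2
    simpa using h2
  -- A maps W into (hence onto) W.
  have hmaple : Submodule.map A.toLinearMap W ≤ W := by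
    refine le_trans (Submodule.map_mono hWS) ?_
    rw [Submodule.map_span, Submodule.span_le]
    rintro _ ⟨v, hvL, rfl⟩
    exact keyW v hvL
  have hmapeq : Submodule.map A.toLinearMap W = W := by
    apply Submodule.eq_of_le_of_finrank_le hmaple
    rw [LinearEquiv.finrank_map_eq]
  -- Conclusion.
  refine ⟨A p - p, ?_⟩
  ext y
  simp only [Set.mem_image]
  constructor
  · rintro ⟨x, hx, rfl⟩
    have hxp : x - p ∈ W := by
      have := AffineSubspace.vsub_mem_direction hx hp
      simpa using this
    have hAxp : A (x - p) ∈ W := hmapeq ▸ Submodule.mem_map_of_mem hxp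
    refine ⟨p + A (x - p), ?_, ?_⟩
    · have := AffineSubspace.vadd_mem_of_mem_direction hAxp hp
      simpa [add_comm] using this
    · rw [map_sub]; abel
  · rintro ⟨x, hx, rfl⟩
    have hxp : x - p ∈ W := by
      have := AffineSubspace.vsub_mem_direction hx hp
      simpa using this
    have hsymm : A.symm (x - p) ∈ W := by
      rw [← hmapeq] at hxp
      obtain ⟨w, hw, hAw⟩ := hxp
      have : A.symm (x - p) = w := by
        rw [← hAw]; exact A.symm_apply_apply w
      rw [this]; exact hw
    refine ⟨p + A.symm (x - p), ?_, ?_⟩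
    · have := AffineSubspace.vadd_mem_of_mem_direction hsymm hp
      simpa [add_comm] using this
    · rw [map_add, A.apply_symm_apply]; abel
end
end
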